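/- arXiv:1512.09265 — 5 statements merged into one kernel-verified Lean document; each statement's English description precedes it below -/
import Mathlib

section
/- The function (x, y) ↦ 1/(1 − x·y) is integrable on the open unit square (0,1) × (0,1) in ℝ², and its integral equals ζ(2) = π²/6. -/
open MeasureTheory Real

lemma lint_pow (n : ℕ) : ∫⁻ x in Set.Ioo (0:ℝ) 1, ENNReal.ofReal (x ^ n) =
    ENNReal.ofReal (1 / (n + 1)) := by
  rw [← ofReal_integral_eq_lintegral_ofReal]
  · congr 1
    rw [← MeasureTheory.integral_Ioc_eq_integral_Ioo,
      ← intervalIntegral.integral_of_le (by norm_num : (0:ℝ) ≤ 1)]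
    simp [integral_pow]
  · exact ((continuous_pow n).integrableOn_Ioc).mono_set Set.Ioo_subset_Ioc_self
  · filter_upwards [ae_restrict_mem measurableSet_Ioo] with x hx
    exact pow_nonneg hx.1.le n

lemma lint_sq (n : ℕ) : ∫⁻ p in Set.Ioo (0:ℝ) 1 ×ˢ Set.Ioo (0:ℝ) 1,
    ENNReal.ofReal ((p.1 * p.2) ^ n) = ENNReal.ofReal (1 / (n+1)^2) := by
  have hset : MeasurableSet (Set.Ioo (0:ℝ) 1 ×ˢ Set.Ioo (0:ℝ) 1) :=
    measurableSet_Ioo.prod measurableSet_Ioo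
  rw [setLIntegral_congr_fun hset (g := fun p : ℝ × ℝ =>
      ENNReal.ofReal (p.1 ^ n) * ENNReal.ofReal (p.2 ^ n)) ?_]
  · rw [Measure.volume_eq_prod, ← Measure.prod_restrict,
      lintegral_prod_mul (f := fun x : ℝ => ENNReal.ofReal (x ^ n))
        (g := fun x : ℝ => ENNReal.ofReal (x ^ n))
        (by fun_prop) (by fun_prop),
      lint_pow, ← ENNReal.ofReal_mul (by positivity)]
    congr 1
    field_simp
  · intro p hp
    dsimp only
    rw [mul_pow, ENNReal.ofReal_mul (pow_nonneg hp.1.1.le n)]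

lemma pointwise_geom {x y : ℝ} (hx : x ∈ Set.Ioo (0:ℝ) 1) (hy : y ∈ Set.Ioo (0:ℝ) 1) :
    ENNReal.ofReal (1 / (1 - x * y)) = ∑' n : ℕ, ENNReal.ofReal ((x * y) ^ n) := by
  have h0 : (0:ℝ) ≤ x * y := mul_nonneg hx.1.le hy.1.le
  have h1 : x * y < 1 := by nlinarith [hx.1, hx.2, hy.1, hy.2]
  rw [one_div, ← tsum_geometric_of_lt_one h0 h1,
    ENNReal.ofReal_tsum_of_nonneg (fun n => pow_nonneg h0 n)
      (summable_geometric_of_lt_one h0 h1)]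

lemma main_lint : ∫⁻ p in Set.Ioo (0:ℝ) 1 ×ˢ Set.Ioo (0:ℝ) 1,
    ENNReal.ofReal (1 / (1 - p.1 * p.2)) =
    ENNReal.ofReal (∑' n : ℕ, 1 / ((n:ℝ)+1)^2) := by
  have hset : MeasurableSet (Set.Ioo (0:ℝ) 1 ×ˢ Set.Ioo (0:ℝ) 1) :=
    measurableSet_Ioo.prod measurableSet_Ioo
  have hsum : Summable (fun n : ℕ => 1 / ((n:ℝ)+1)^2) := by
    have h := (Real.summable_one_div_nat_pow (p := 2)).mpr one_lt_two
    have := (summable_nat_add_iff 1).mpr h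
    simpa using this
  rw [setLIntegral_congr_fun hset (g := fun p : ℝ × ℝ =>
      ∑' n : ℕ, ENNReal.ofReal ((p.1 * p.2) ^ n) )
      (by intro p hp; exact pointwise_geom hp.1 hp.2),
    lintegral_tsum (fun n => by fun_prop)]
  simp_rw [lint_sq]
  rw [← ENNReal.ofReal_tsum_of_nonneg (fun n => by positivity) hsum]

lemma shift_sum : (∑' n : ℕ, 1 / ((n:ℝ)+1)^2) = π ^ 2 / 6 := by
  have h : HasSum (fun n : ℕ => (1:ℝ) / ((n:ℝ)+1)^2) (π ^ 2 / 6) := by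
    have : HasSum (fun n : ℕ => (1:ℝ) / ((n+1:ℕ):ℝ)^2) (π ^ 2 / 6) :=
      (hasSum_nat_add_iff (f := fun n : ℕ => (1:ℝ) / (n:ℝ)^2) 1).mpr
        (by simpa using hasSum_zeta_two)
    simpa [add_comm] using this
  exact h.tsum_eq

lemma pnat_sum : (∑' k : ℕ+, (1:ℝ) / (k : ℝ) ^ 2) = π ^ 2 / 6 := by
  have h : HasSum (fun k : ℕ+ => (1:ℝ) / (k : ℝ) ^ 2) (π ^ 2 / 6) := by
    have hinj : Function.Injective ((↑) : ℕ+ → ℕ) := PNat.coe_injective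
    have h0 : ∀ x ∉ Set.range ((↑) : ℕ+ → ℕ), (1:ℝ) / (x:ℝ)^2 = 0 := by
      intro x hx
      have : x = 0 := by
        by_contra h
        exact hx ⟨⟨x, Nat.pos_of_ne_zero h⟩, rfl⟩
      simp [this]
    have := (Function.Injective.hasSum_iff hinj h0).mpr hasSum_zeta_two
    simpa [Function.comp_def] using this
  exact h.tsum_eq


/-- The function `(x, y) ↦ 1/(1 − x·y)` is integrable on the open unit square
`(0,1) × (0,1)` in `ℝ²`, and its integral equals `ζ(2) = π²/6`. -/
theorem integrable_and_integral_one_div_one_sub_mul :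
    IntegrableOn (fun p : ℝ × ℝ => 1 / (1 - p.1 * p.2))
      (Set.Ioo (0 : ℝ) 1 ×ˢ Set.Ioo (0 : ℝ) 1) ∧
    (∫ p in Set.Ioo (0 : ℝ) 1 ×ˢ Set.Ioo (0 : ℝ) 1, (1 : ℝ) / (1 - p.1 * p.2))
      = ∑' k : ℕ+, (1 : ℝ) / (k : ℝ) ^ 2 ∧
    (∑' k : ℕ+, (1 : ℝ) / (k : ℝ) ^ 2) = π ^ 2 / 6 := by
  have hset : MeasurableSet (Set.Ioo (0:ℝ) 1 ×ˢ Set.Ioo (0:ℝ) 1) :=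
    measurableSet_Ioo.prod measurableSet_Ioo
  have hmeas : Measurable (fun p : ℝ × ℝ => 1 / (1 - p.1 * p.2)) := by fun_prop
  have hnn : 0 ≤ᵐ[volume.restrict (Set.Ioo (0:ℝ) 1 ×ˢ Set.Ioo (0:ℝ) 1)]
      (fun p : ℝ × ℝ => 1 / (1 - p.1 * p.2)) := by
    filter_upwards [ae_restrict_mem hset] with p hp
    have : p.1 * p.2 < 1 := by nlinarith [hp.1.1, hp.1.2, hp.2.1, hp.2.2]
    exact div_nonneg zero_le_one (by linarith)
  have hint : IntegrableOn (fun p : ℝ × ℝ => 1 / (1 - p.1 * p.2))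
      (Set.Ioo (0 : ℝ) 1 ×ˢ Set.Ioo (0 : ℝ) 1) := by
    refine ⟨hmeas.aestronglyMeasurable, ?_⟩
    rw [hasFiniteIntegral_iff_ofReal hnn, main_lint]
    exact ENNReal.ofReal_lt_top
  refine ⟨hint, ?_, pnat_sum⟩
  rw [integral_eq_lintegral_of_nonneg_ae hnn hmeas.aestronglyMeasurable, main_lint,
    ENNReal.toReal_ofReal (tsum_nonneg fun n => by positivity), shift_sum, pnat_sum]
end

section
/- Let r ≥ 1 and n_1, …, n_r ≥ 1 be integers with n_r ≥ 2, and set N = n_1 + ⋯ + n_r. Define ε_1, …, ε_N ∈ {0, 1} by ε_j = 1 if j ∈ {1, n_1 + 1, n_1 + n_2 + 1, …, n_1 + ⋯ + n_{r−1} + 1} and ε_j = 0 otherwise (i.e. the sequence (ε_1, …, ε_N) consists of a 1 followed by n_1 − 1 zeros, then a 1 followed by n_2 − 1 zeros, and so on). Then the function (t_1, …, t_N) ↦ ∏_{j=1}^N 1/(t_j − ε_j) is integrable on the open simplex {0 < t_1 < ⋯ < t_N < 1} ⊂ ℝ^N, and ζ(n_1, …, n_r) = (−1)^r ∫_{0 <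 t_1 < ⋯ < t_N < 1} ∏_{j=1}^N dt_j/(t_j − ε_j). -/
open MeasureTheory Set
open scoped ENNReal Classical

namespace MZVAux


/-- Iterated integral defined recursively. -/
noncomputable def It (g : ℕ → ℝ → ℝ≥0∞) : ℕ → ℝ → ℝ≥0∞
  | 0, _ => 1
  | (M+1), b => ∫⁻ x in Set.Ioo (0:ℝ) b, g M x * It g M x

/-- The open ordered simplex with upper bound `b`. -/
def Sim (M : ℕ) (b : ℝ) : Set (Fin M → ℝ) :=
  {t | StrictMono t ∧ ∀ j, t j ∈ Set.Ioo 0 b}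

lemma measurableSet_Sim (M : ℕ) (b : ℝ) : MeasurableSet (Sim M b) := by
  have h1 : MeasurableSet {t : Fin M → ℝ | StrictMono t} := by
    have : {t : Fin M → ℝ | StrictMono t}
        = ⋂ (p : Fin M × Fin M) (_ : p.1 < p.2), {t | t p.1 < t p.2} := by
      ext t
      simp only [Set.mem_setOf_eq, Set.mem_iInter]
      exact ⟨fun h p hp => h hp, fun h a c hac => h (a, c) hac⟩
    rw [this]
    exact MeasurableSet.iInter fun p => MeasurableSet.iInter fun _ =>
      measurableSet_lt (measurable_pi_apply _) (measurable_pi_apply _)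
  have h2 : MeasurableSet {t : Fin M → ℝ | ∀ j, t j ∈ Set.Ioo 0 b} := by
    have : {t : Fin M → ℝ | ∀ j, t j ∈ Set.Ioo 0 b}
        = ⋂ j, (fun t : Fin M → ℝ => t j) ⁻¹' (Set.Ioo 0 b) := by ext; simp
    rw [this]
    exact MeasurableSet.iInter fun j => (measurable_pi_apply j) measurableSet_Ioo
  exact h1.inter h2

lemma snoc_mem_Sim_iff {M : ℕ} {b x : ℝ} {tt : Fin M → ℝ} :
    Fin.snoc tt x ∈ Sim (M+1) b ↔ x ∈ Set.Ioo (0:ℝ) b ∧ tt ∈ Sim M x := by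
  constructor
  · rintro ⟨hsm, hb⟩
    have hx := hb (Fin.last M); rw [Fin.snoc_last] at hx
    refine ⟨hx, ⟨fun a c hac => ?_, fun j => ?_⟩⟩
    · have := hsm (Fin.castSucc_lt_castSucc_iff.2 hac)
      simpa [Fin.snoc_castSucc] using this
    · have h0 := hb j.castSucc; rw [Fin.snoc_castSucc] at h0
      have hlt := hsm (Fin.castSucc_lt_last j)
      rw [Fin.snoc_castSucc, Fin.snoc_last] at hlt
      exact ⟨h0.1, hlt⟩
  · rintro ⟨hx, hsm, hb⟩
    constructor
    · intro a c hac
      rcases Fin.exists_castSucc_eq.2 (Fin.ne_last_of_lt hac) with ⟨a', rfl⟩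
      rcases Fin.eq_castSucc_or_eq_last c with ⟨c', rfl⟩ | rfl
      · rw [Fin.snoc_castSucc, Fin.snoc_castSucc]
        exact hsm (Fin.castSucc_lt_castSucc_iff.1 hac)
      · rw [Fin.snoc_castSucc, Fin.snoc_last]; exact (hb a').2
    · intro j
      rcases Fin.eq_castSucc_or_eq_last j with ⟨j', rfl⟩ | rfl
      · rw [Fin.snoc_castSucc]; exact ⟨(hb j').1, (hb j').2.trans hx.2⟩
      · rw [Fin.snoc_last]; exact hx

lemma lintegral_Sim (g : ℕ → ℝ → ℝ≥0∞) (hg : ∀ j, Measurable (g j)) :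
    ∀ (M : ℕ) (b : ℝ),
      ∫⁻ t in Sim M b, ∏ j : Fin M, g (j : ℕ) (t j) = It g M b := by
  intro M
  induction M with
  | zero =>
      intro b
      simp only [It, Finset.univ_eq_empty, Finset.prod_empty]
      have : Sim 0 b = Set.univ := by
        ext t
        simp only [Sim, Set.mem_setOf_eq, Set.mem_univ, iff_true]
        exact ⟨fun a c h => a.elim0, fun j => j.elim0⟩
      rw [this, Measure.restrict_univ, lintegral_one, volume_pi, Measure.pi_univ]
      simp
  | succ M ih =>
      intro b
      have hFmeas : Measurable (fun t : Fin (M+1) → ℝ => ∏ j : Fin (M+1), g (j : ℕ) (t j)) :=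
        Finset.measurable_prod _ fun j _ => (hg _).comp (measurable_pi_apply j)
      have hinner : Measurable (fun t : Fin M → ℝ => ∏ j : Fin M, g (j : ℕ) (t j)) :=
        Finset.measurable_prod _ fun j _ => (hg _).comp (measurable_pi_apply j)
      set F : (Fin (M+1) → ℝ) → ℝ≥0∞ :=
        Set.indicator (Sim (M+1) b) (fun t => ∏ j : Fin (M+1), g (j : ℕ) (t j)) with hF
      have hFm : Measurable F := hFmeas.indicator (measurableSet_Sim _ _)
      set e := MeasurableEquiv.piFinSuccAbove (fun _ : Fin (M+1) => ℝ) (Fin.last M) with he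
      have hmp : MeasurePreserving e volume ((volume : Measure ℝ).prod volume) :=
        volume_preserving_piFinSuccAbove (fun _ : Fin (M+1) => ℝ) (Fin.last M)
      have hsymm : ∀ (x : ℝ) (tt : Fin M → ℝ), e.symm (x, tt) = Fin.snoc tt x := by
        intro x tt
        show (Fin.insertNthEquiv (fun _ : Fin (M+1) => ℝ) (Fin.last M)) (x, tt) = _
        simp [Fin.insertNthEquiv, Fin.insertNth_last']
      calc ∫⁻ t in Sim (M+1) b, ∏ j : Fin (M+1), g (j : ℕ) (t j)
          = ∫⁻ t, F t := (lintegral_indicator (measurableSet_Sim _ _) _).symm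
        _ = ∫⁻ t, (F ∘ e.symm) (e t) := by
              congr 1; funext t; simp
        _ = ∫⁻ p, (F ∘ e.symm) p ∂((volume : Measure ℝ).prod volume) :=
              hmp.lintegral_comp_emb e.measurableEmbedding _
        _ = ∫⁻ x, ∫⁻ tt, (F ∘ e.symm) (x, tt) := by
              exact lintegral_prod _ ((hFm.comp e.symm.measurable).aemeasurable)
        _ = ∫⁻ x, Set.indicator (Set.Ioo (0:ℝ) b)
              (fun x => g M x * ∫⁻ tt in Sim M x, ∏ j : Fin M, g (j : ℕ) (tt j)) x := by
              congr 1; funext x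
              by_cases hx : x ∈ Set.Ioo (0:ℝ) b
              · rw [Set.indicator_of_mem hx,
                  ← lintegral_indicator (measurableSet_Sim M x), ← lintegral_const_mul _
                    (hinner.indicator (measurableSet_Sim M x))]
                congr 1; funext tt
                simp only [Function.comp_apply, hsymm]
                by_cases ht : tt ∈ Sim M x
                · rw [hF, Set.indicator_of_mem (snoc_mem_Sim_iff.2 ⟨hx, ht⟩),
                    Set.indicator_of_mem ht, Fin.prod_univ_castSucc]
                  simp only [Fin.snoc_castSucc, Fin.snoc_last, Fin.coe_castSucc, Fin.val_last]
                  ring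
                · rw [hF, Set.indicator_of_notMem, Set.indicator_of_notMem ht, mul_zero]
                  exact fun hmem => ht (snoc_mem_Sim_iff.1 hmem).2
              · rw [Set.indicator_of_notMem hx]
                have : ∀ tt : Fin M → ℝ, F (e.symm (x, tt)) = 0 := by
                  intro tt
                  rw [hsymm, hF, Set.indicator_of_notMem]
                  exact fun hmem => hx (snoc_mem_Sim_iff.1 hmem).1
                simp only [Function.comp_apply, this]
                simp
        _ = ∫⁻ x in Set.Ioo (0:ℝ) b, g M x * ∫⁻ tt in Sim M x, ∏ j : Fin M, g (j : ℕ) (tt j) :=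
              lintegral_indicator measurableSet_Ioo _
        _ = It g (M+1) b := by
              rw [It]
              congr 1; funext x
              rw [ih]



/-- (C): basic monomial integral. -/
lemma lint_pow (b : ℝ) (hb : 0 ≤ b) (p : ℕ) :
    ∫⁻ x in Set.Ioo (0:ℝ) b, ENNReal.ofReal (x^p)
      = ENNReal.ofReal (b^(p+1)/(p+1)) := by
  have hint : IntegrableOn (fun x : ℝ => x ^ p) (Set.Ioo 0 b) volume := by
    rw [← intervalIntegrable_iff_integrableOn_Ioo_of_le hb]
    exact intervalIntegral.intervalIntegrable_pow p
  have hnn : 0 ≤ᵐ[volume.restrict (Set.Ioo (0:ℝ) b)] (fun x : ℝ => x ^ p) := by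
    filter_upwards [ae_restrict_mem measurableSet_Ioo] with x hx
    exact pow_nonneg hx.1.le p
  rw [← ofReal_integral_eq_lintegral_ofReal hint hnn]
  congr 1
  rw [← integral_Ioc_eq_integral_Ioo, ← intervalIntegral.integral_of_le hb,
    integral_pow]
  push_cast
  rw [zero_pow (by omega)]
  ring

/-- (B'): monomial with constant. -/
lemma lint_pow_div (b : ℝ) (hb : 0 ≤ b) (p : ℕ) (D : ℝ) (hD : 0 < D) :
    ∫⁻ x in Set.Ioo (0:ℝ) b, ENNReal.ofReal (x^p) * ENNReal.ofReal (1/D)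
      = ENNReal.ofReal (b^(p+1)/((p+1)*D)) := by
  rw [lintegral_mul_const _ (show Measurable fun x : ℝ => ENNReal.ofReal (x^p) by fun_prop),
    lint_pow b hb p, ← ENNReal.ofReal_mul (by positivity)]
  congr 1
  field_simp

/-- (B): the `1/x` step. -/
lemma step_inv (b : ℝ) (hb : 0 < b) (A : ℕ) (hA : 1 ≤ A) (D : ℝ) (hD : 0 < D) :
    ∫⁻ x in Set.Ioo (0:ℝ) b, ENNReal.ofReal (1/x) * ENNReal.ofReal (x^A / D)
      = ENNReal.ofReal (b^A/(A*D)) := by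
  have hcong : ∫⁻ x in Set.Ioo (0:ℝ) b, ENNReal.ofReal (1/x) * ENNReal.ofReal (x^A / D)
      = ∫⁻ x in Set.Ioo (0:ℝ) b, ENNReal.ofReal (x^(A-1)) * ENNReal.ofReal (1/D) := by
    refine setLIntegral_congr_fun measurableSet_Ioo (fun x hx => ?_)
    have hx0 : (0:ℝ) < x := hx.1
    rw [← ENNReal.ofReal_mul (by positivity), ← ENNReal.ofReal_mul (by positivity)]
    congr 1
    have hx0' : x ≠ 0 := ne_of_gt hx0
    rw [show A = (A-1)+1 by omega, pow_succ]
    field_simp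
    rw [Nat.add_sub_cancel]
  rw [hcong, lint_pow_div b hb.le (A-1) D hD]
  congr 1
  have : ((A:ℝ) - 1) + 1 = A := by push_cast; ring
  rw [show (A:ℕ) - 1 + 1 = A by omega]
  congr 2
  push_cast [Nat.cast_sub hA]
  ring

/-- (A): the `1/(1-x)` step. -/
lemma step_geo (b : ℝ) (hb0 : 0 < b) (hb1 : b ≤ 1) (A : ℕ) (D : ℝ) (hD : 0 < D) :
    ∫⁻ x in Set.Ioo (0:ℝ) b, ENNReal.ofReal (1/(1-x)) * ENNReal.ofReal (x^A / D)
      = ∑' μ : ℕ, ENNReal.ofReal (b^(A+μ+1)/((A+μ+1)*D)) := by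
  have hcong : ∫⁻ x in Set.Ioo (0:ℝ) b, ENNReal.ofReal (1/(1-x)) * ENNReal.ofReal (x^A / D)
      = ∫⁻ x in Set.Ioo (0:ℝ) b, ∑' μ : ℕ, ENNReal.ofReal (x^(A+μ)) * ENNReal.ofReal (1/D) := by
    refine setLIntegral_congr_fun measurableSet_Ioo (fun x hx => ?_)
    have hx0 : (0:ℝ) < x := hx.1
    have hx1 : x < 1 := lt_of_lt_of_le hx.2 hb1
    have hsum : Summable (fun μ : ℕ => x^(A+μ)) := by
      have := (summable_geometric_of_lt_one hx0.le hx1).mul_left (x^A)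
      simpa [pow_add] using this
    have hts : (∑' μ : ℕ, x^(A+μ)) = x^A * (1-x)⁻¹ := by
      have h1 : (∑' μ : ℕ, x^(A+μ)) = x^A * ∑' μ : ℕ, x^μ := by
        rw [← tsum_mul_left]
        congr 1; funext μ; rw [pow_add]
      rw [h1, tsum_geometric_of_lt_one hx0.le hx1]
    have key : ENNReal.ofReal (1/(1-x)) * ENNReal.ofReal (x^A / D)
        = ENNReal.ofReal ((∑' μ : ℕ, x^(A+μ)) * (1/D)) := by
      have h1x : (0:ℝ) < 1 - x := by linarith
      rw [hts, ← ENNReal.ofReal_mul (by positivity)]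
      congr 1
      field_simp
    rw [key, ← tsum_mul_right, ENNReal.ofReal_tsum_of_nonneg
      (fun μ => by positivity) (hsum.mul_right _)]
    congr 1; funext μ
    rw [ENNReal.ofReal_mul (by positivity)]
  rw [hcong, lintegral_tsum (fun μ => Measurable.aemeasurable (by fun_prop :
    Measurable fun x : ℝ => ENNReal.ofReal (x^(A+μ)) * ENNReal.ofReal (1/D)))]
  congr 1; funext μ
  rw [lint_pow_div b hb0.le (A+μ) D hD]
  congr 2
  push_cast; ring



def P (ν : ℕ → ℕ) (i : ℕ) : ℕ := ∑ j ∈ Finset.range i, ν j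

noncomputable def gfun (ν : ℕ → ℕ) (r : ℕ) : ℕ → ℝ → ℝ≥0∞ := fun j x =>
  ENNReal.ofReal (if ∃ i < r, j = P ν i then 1/(1-x) else 1/x)

lemma gfun_measurable (ν : ℕ → ℕ) (r : ℕ) : ∀ j, Measurable (gfun ν r j) := by
  intro j
  unfold gfun
  by_cases h : ∃ i < r, j = P ν i
  · simp only [if_pos h]; fun_prop
  · simp only [if_neg h]; fun_prop

lemma P_succ (ν : ℕ → ℕ) (i : ℕ) : P ν (i+1) = P ν i + ν i := Finset.sum_range_succ ν i

lemma P_mono (ν : ℕ → ℕ) : Monotone (P ν) := fun a b h =>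
  Finset.sum_le_sum_of_subset (Finset.range_subset_range.2 h)

lemma P_zero (ν : ℕ → ℕ) : P ν 0 = 0 := rfl

lemma not_eps (ν : ℕ → ℕ) (r : ℕ) {i s : ℕ} (hi : i < r) (hs1 : 1 ≤ s) (hs2 : s < ν i) :
    ¬ ∃ i' < r, P ν i + s = P ν i' := by
  rintro ⟨i', hi', heq⟩
  rcases le_or_gt i' i with h | h
  · have := P_mono ν h
    omega
  · have h1 : P ν (i+1) ≤ P ν i' := P_mono ν h
    rw [P_succ] at h1
    omega

/-! ### partial sums of gap vectors -/

def psum {t : ℕ} (m : Fin t → ℕ+) (c : ℕ) : ℕ :=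
  ∑ j ∈ Finset.range c, (if h : j < t then (m ⟨j, h⟩ : ℕ) else 0)

lemma psum_pos {t : ℕ} (ht : 0 < t) (m : Fin t → ℕ+) {c : ℕ} (hc : 1 ≤ c) :
    0 < psum m c := by
  have h0 : 0 ∈ Finset.range c := by simp; omega
  unfold psum
  have hle := Finset.single_le_sum
    (f := fun j => if h : j < t then ((m ⟨j, h⟩ : ℕ+) : ℕ) else 0)
    (fun j _ => Nat.zero_le _) h0
  have hle' : ((m ⟨0, ht⟩ : ℕ+) : ℕ)
      ≤ ∑ j ∈ Finset.range c, if h : j < t then ((m ⟨j, h⟩ : ℕ+) : ℕ) else 0 := by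
    simpa [dif_pos ht] using hle
  exact lt_of_lt_of_le (m ⟨0, ht⟩).2 hle' 

lemma psum_snoc {t : ℕ} (m : Fin t → ℕ+) (g : ℕ+) {c : ℕ} (hc : c ≤ t) :
    psum (Fin.snoc m g) c = psum m c := by
  unfold psum
  refine Finset.sum_congr rfl fun j hj => ?_
  rw [Finset.mem_range] at hj
  have hjt : j < t := lt_of_lt_of_le hj hc
  rw [dif_pos hjt, dif_pos (by omega : j < t + 1)]
  have h : (⟨j, by omega⟩ : Fin (t+1)) = Fin.castSucc ⟨j, hjt⟩ := rfl
  rw [h, Fin.snoc_castSucc]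

lemma psum_snoc_top {t : ℕ} (m : Fin t → ℕ+) (g : ℕ+) :
    psum (Fin.snoc m g) (t+1) = psum m t + g := by
  have h2 : psum (Fin.snoc m g) t = psum m t := psum_snoc m g (le_refl t)
  unfold psum at h2 ⊢
  rw [Finset.sum_range_succ, h2, dif_pos (Nat.lt_succ_self t)]
  congr 1
  have h : (⟨t, Nat.lt_succ_self t⟩ : Fin (t+1)) = Fin.last t := rfl
  rw [h, Fin.snoc_last]

/-! ### the term function -/

noncomputable def term (ν : ℕ → ℕ) (i s : ℕ) (b : ℝ) (m : Fin (i+1) → ℕ+) : ℝ≥0∞ :=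
  ENNReal.ofReal (b ^ psum m (i+1) /
    ∏ i' : Fin (i+1), (psum m (i'.val+1) : ℝ) ^ (if i'.val = i then s else ν i'.val))

lemma denom_split (ν : ℕ → ℕ) (i s : ℕ) (m : Fin (i+1) → ℕ+) :
    ∏ i' : Fin (i+1), (psum m (i'.val+1) : ℝ) ^ (if i'.val = i then s else ν i'.val)
      = (∏ i' : Fin i, (psum m (i'.val+1) : ℝ) ^ (ν i'.val)) * (psum m (i+1) : ℝ) ^ s := by
  rw [Fin.prod_univ_castSucc]
  congr 1
  · refine Finset.prod_congr rfl fun i' _ => ?_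
    rw [Fin.coe_castSucc, if_neg (by omega : ¬ (i'.val = i))]
  · rw [Fin.val_last, if_pos rfl]

lemma denom_full (ν : ℕ → ℕ) (i : ℕ) (m : Fin (i+1) → ℕ+) :
    ∏ i' : Fin (i+1), (psum m (i'.val+1) : ℝ) ^ (if i'.val = i then ν i else ν i'.val)
      = ∏ i' : Fin (i+1), (psum m (i'.val+1) : ℝ) ^ (ν i'.val) := by
  refine Finset.prod_congr rfl fun i' _ => ?_
  by_cases h : i'.val = i
  · rw [if_pos h, h]
  · rw [if_neg h]

lemma prodQ_pos (ν : ℕ → ℕ) {t c : ℕ} (ht : 0 < t) (m : Fin t → ℕ+)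
    (e : Fin c → ℕ) (f : Fin c → ℕ) (hf : ∀ i', 1 ≤ f i') :
    0 < ∏ i' : Fin c, (psum m (f i') : ℝ) ^ (e i') :=
  Finset.prod_pos fun i' _ => pow_pos
    (by exact_mod_cast psum_pos ht m (hf i')) _

lemma term_measurable (ν : ℕ → ℕ) (i s : ℕ) (m : Fin (i+1) → ℕ+) :
    Measurable (fun x : ℝ => term ν i s x m) := by
  unfold term; fun_prop

def oneEquiv : ℕ+ ≃ (Fin 1 → ℕ+) where
  toFun g := fun _ => g
  invFun m := m 0
  left_inv g := rfl
  right_inv m := funext fun i => by rw [Fin.eq_zero i]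

/-! ### snoc equivalence -/

def snocEquiv (t : ℕ) : ((Fin t → ℕ+) × ℕ+) ≃ (Fin (t+1) → ℕ+) where
  toFun p := Fin.snoc p.1 p.2
  invFun m := (Fin.init m, m (Fin.last t))
  left_inv p := by simp [Fin.init_snoc, Fin.snoc_last]
  right_inv m := by simp [Fin.snoc_init_self]

/-! ### the main induction -/

lemma It_eq (ν : ℕ → ℕ) (r : ℕ) (hr : 0 < r) (hν : ∀ i < r, 1 ≤ ν i) :
    ∀ i, i < r → ∀ s, 1 ≤ s → s ≤ ν i → ∀ b, b ∈ Set.Ioc (0:ℝ) 1 →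
      It (gfun ν r) (P ν i + s) b = ∑' m : Fin (i+1) → ℕ+, term ν i s b m := by
  -- the `1/x` step, factored out
  have stepx : ∀ i, i < r → ∀ s, 1 ≤ s → s + 1 ≤ ν i →
      (∀ b, b ∈ Set.Ioc (0:ℝ) 1 →
        It (gfun ν r) (P ν i + s) b = ∑' m : Fin (i+1) → ℕ+, term ν i s b m) →
      ∀ b, b ∈ Set.Ioc (0:ℝ) 1 →
        It (gfun ν r) (P ν i + (s+1)) b = ∑' m : Fin (i+1) → ℕ+, term ν i (s+1) b m := by
    intro i hi s hs1 hs2 IH b hb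
    have hb0 : (0:ℝ) < b := hb.1
    rw [show P ν i + (s+1) = (P ν i + s) + 1 by ring, It]
    have hgf : ∀ x : ℝ, gfun ν r (P ν i + s) x = ENNReal.ofReal (1/x) := by
      intro x; unfold gfun
      rw [if_neg (not_eps ν r hi hs1 (by omega))]
    calc ∫⁻ x in Set.Ioo (0:ℝ) b, gfun ν r (P ν i + s) x * It (gfun ν r) (P ν i + s) x
        = ∫⁻ x in Set.Ioo (0:ℝ) b,
            ∑' m : Fin (i+1) → ℕ+, ENNReal.ofReal (1/x) * term ν i s x m := by
          refine setLIntegral_congr_fun measurableSet_Ioo (fun x hx => ?_)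
          rw [IH x ⟨hx.1, (lt_of_lt_of_le hx.2 hb.2).le⟩, hgf x, ENNReal.tsum_mul_left]
      _ = ∑' m : Fin (i+1) → ℕ+,
            ∫⁻ x in Set.Ioo (0:ℝ) b, ENNReal.ofReal (1/x) * term ν i s x m :=
          lintegral_tsum fun m => (Measurable.mul (by fun_prop) (term_measurable ν i s m)).aemeasurable
      _ = ∑' m : Fin (i+1) → ℕ+, term ν i (s+1) b m := by
          congr 1; funext m
          have hK : 1 ≤ psum m (i+1) := psum_pos (Nat.succ_pos i) m (by omega)
          have hQ : (0:ℝ) < ∏ i' : Fin i, (psum m (i'.val+1) : ℝ) ^ (ν i'.val) :=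
            prodQ_pos ν (Nat.succ_pos i) m _ _ (fun i' => by omega)
          simp only [term, denom_split]
          rw [step_inv b hb0 (psum m (i+1)) hK
            ((∏ i' : Fin i, (psum m (i'.val+1) : ℝ) ^ (ν i'.val)) * (psum m (i+1) : ℝ) ^ s)
            (by positivity)]
          congr 1
          rw [pow_succ]
          ring
  intro i
  induction i with
  | zero =>
      intro hi s hs1
      induction s, hs1 using Nat.le_induction with
      | base =>
          intro hs2 b hb
          rw [show P ν 0 + 1 = 0 + 1 by rw [P_zero], It]
          have hgf : ∀ x:ℝ, gfun ν r 0 x = ENNReal.ofReal (1/(1-x)) := by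
            intro x; unfold gfun; rw [if_pos ⟨0, hr, (P_zero ν).symm⟩]
          have hcong : ∫⁻ x in Set.Ioo (0:ℝ) b, gfun ν r 0 x * It (gfun ν r) 0 x
              = ∫⁻ x in Set.Ioo (0:ℝ) b,
                  ENNReal.ofReal (1/(1-x)) * ENNReal.ofReal (x^(0:ℕ)/1) := by
            refine setLIntegral_congr_fun measurableSet_Ioo (fun x hx => ?_)
            rw [hgf x, It, mul_one]
            norm_num
          rw [hcong, step_geo b hb.1 hb.2 0 1 one_pos,
            ← (Equiv.pnatEquivNat.symm.trans oneEquiv).tsum_eq (fun m => term ν 0 1 b m)]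
          congr 1; funext μ
          show _ = term ν 0 1 b (fun _ => Nat.succPNat μ)
          have hps : psum (fun _ : Fin 1 => Nat.succPNat μ) 1 = μ + 1 := by
            simp [psum]
          simp only [term, Fin.prod_univ_one]
          norm_num
          simp only [hps]
          congr 1
          push_cast
          ring
      | succ s hs1' ihs =>
          intro hs2 b hb
          exact stepx 0 hi s hs1' hs2 (fun b' hb' => ihs (by omega) b' hb') b hb
  | succ i ih =>
      intro hi1 s hs1
      induction s, hs1 using Nat.le_induction with
      | base =>
          intro hs2 b hb
          have hiIH := ih (by omega) (ν i) (hν i (by omega)) (le_refl _)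
          rw [show P ν (i+1) + 1 = (P ν i + ν i) + 1 by rw [P_succ], It]
          have hgf : ∀ x:ℝ, gfun ν r (P ν i + ν i) x = ENNReal.ofReal (1/(1-x)) := by
            intro x; unfold gfun
            rw [if_pos ⟨i+1, hi1, (P_succ ν i).symm⟩]
          calc ∫⁻ x in Set.Ioo (0:ℝ) b, gfun ν r (P ν i + ν i) x * It (gfun ν r) (P ν i + ν i) x
              = ∫⁻ x in Set.Ioo (0:ℝ) b, ∑' m : Fin (i+1) → ℕ+,
                  ENNReal.ofReal (1/(1-x)) * term ν i (ν i) x m := by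
                refine setLIntegral_congr_fun measurableSet_Ioo (fun x hx => ?_)
                rw [hiIH x ⟨hx.1, (lt_of_lt_of_le hx.2 hb.2).le⟩, hgf x, ENNReal.tsum_mul_left]
            _ = ∑' m : Fin (i+1) → ℕ+, ∫⁻ x in Set.Ioo (0:ℝ) b,
                  ENNReal.ofReal (1/(1-x)) * term ν i (ν i) x m :=
                lintegral_tsum fun m => (Measurable.mul (by fun_prop)
                  (term_measurable ν i (ν i) m)).aemeasurable
            _ = ∑' m : Fin (i+1) → ℕ+, ∑' μ : ℕ,
                  ENNReal.ofReal (b^(psum m (i+1)+μ+1)/(((psum m (i+1) : ℝ) + (μ : ℝ) + 1)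
                    * ∏ i' : Fin (i+1), (psum m (i'.val+1) : ℝ) ^ (ν i'.val))) := by
                congr 1; funext m
                have hQ : (0:ℝ) < ∏ i' : Fin (i+1), (psum m (i'.val+1) : ℝ) ^ (ν i'.val) :=
                  prodQ_pos ν (Nat.succ_pos i) m _ _ (fun i' => by omega)
                simp only [term, denom_full]
                exact step_geo b hb.1 hb.2 (psum m (i+1)) _ hQ
            _ = ∑' m' : Fin (i+2) → ℕ+, term ν (i+1) 1 b m' := by
                rw [← (snocEquiv (i+1)).tsum_eq, ENNReal.tsum_prod']
                congr 1; funext m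
                rw [← Equiv.pnatEquivNat.symm.tsum_eq]
                congr 1; funext μ
                show _ = term ν (i+1) 1 b (Fin.snoc m (Equiv.pnatEquivNat.symm μ))
                rw [show (Equiv.pnatEquivNat.symm μ : ℕ+) = Nat.succPNat μ from rfl]
                have hsnoc1 : psum (Fin.snoc m (Nat.succPNat μ)) (i+1+1)
                    = psum m (i+1) + (μ+1) := by
                  rw [psum_snoc_top]; simp
                have hprodeq : ∏ i' : Fin (i+1),
                      (psum (Fin.snoc m (Nat.succPNat μ)) (i'.val+1) : ℝ) ^ (ν i'.val)
                    = ∏ i' : Fin (i+1), (psum m (i'.val+1) : ℝ) ^ (ν i'.val) :=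
                  Finset.prod_congr rfl fun i' _ => by
                    rw [psum_snoc m _ (by omega : i'.val + 1 ≤ i+1)]
                simp only [term, denom_split, hprodeq, hsnoc1]
                congr 1
                push_cast
                ring
      | succ s hs1' ihs =>
          intro hs2 b hb
          exact stepx (i+1) hi1 s hs1' hs2 (fun b' hb' => ihs (by omega) b' hb') b hb



lemma psum_mono {t : ℕ} (m : Fin t → ℕ+) {c c' : ℕ} (h : c ≤ c') :
    psum m c ≤ psum m c' :=
  Finset.sum_le_sum_of_subset (Finset.range_subset_range.2 h)

lemma psum_succ_of_lt {t : ℕ} (m : Fin t → ℕ+) {c : ℕ} (hc : c < t) :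
    psum m (c+1) = psum m c + m ⟨c, hc⟩ := by
  unfold psum
  rw [Finset.sum_range_succ, dif_pos hc]

lemma psum_ge_single {t : ℕ} (m : Fin t → ℕ+) {j c : ℕ} (hj : j < t) (hjc : j < c) :
    (m ⟨j, hj⟩ : ℕ) ≤ psum m c := by
  have := psum_succ_of_lt m hj
  have h2 : psum m (j+1) ≤ psum m c := psum_mono m (by omega)
  omega

/-! ### tsum over pi types -/

lemma tsum_pi_prod (h : ℕ+ → ℝ≥0∞) :
    ∀ t, ∑' m : Fin t → ℕ+, ∏ i, h (m i) = (∑' x : ℕ+, h x) ^ t := by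
  intro t
  induction t with
  | zero =>
      rw [tsum_fintype]
      simp
  | succ t ih =>
      rw [← (snocEquiv t).tsum_eq, ENNReal.tsum_prod']
      have hstep : ∀ m : Fin t → ℕ+,
          (∑' g : ℕ+, ∏ i : Fin (t+1), h ((snocEquiv t) (m, g) i))
            = (∏ i : Fin t, h (m i)) * ∑' g : ℕ+, h g := by
        intro m
        rw [← ENNReal.tsum_mul_left]
        congr 1; funext g
        have hsg : (snocEquiv t) (m, g) = Fin.snoc m g := rfl
        rw [hsg, Fin.prod_univ_castSucc]
        simp
      calc (∑' (m : Fin t → ℕ+) (g : ℕ+), ∏ i : Fin (t+1), h ((snocEquiv t) (m, g) i))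
          = ∑' (m : Fin t → ℕ+), (∏ i : Fin t, h (m i)) * ∑' g : ℕ+, h g := by
            congr 1; funext m; exact hstep m
        _ = (∑' m : Fin t → ℕ+, ∏ i : Fin t, h (m i)) * ∑' g : ℕ+, h g :=
            ENNReal.tsum_mul_right
        _ = (∑' x : ℕ+, h x) ^ (t+1) := by rw [ih, pow_succ]

/-! ### finiteness -/

lemma T_lt_top (ν : ℕ → ℕ) (r' : ℕ) (hν : ∀ i < r'+1, 1 ≤ ν i) (hlast : 2 ≤ ν r') :
    ∑' m : Fin (r'+1) → ℕ+, ENNReal.ofReal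
      (1 / ∏ i' : Fin (r'+1), (psum m (i'.val+1) : ℝ) ^ ν i'.val) < ⊤ := by
  set r := r'+1 with hrdef
  have hr : 0 < r := Nat.succ_pos r'
  set p : ℝ := 1 + 1/r with hpdef
  have hrR : (0:ℝ) < r := by positivity
  have hp1 : 1 < p := by
    rw [hpdef]
    have : (0:ℝ) < 1/r := by positivity
    linarith
  have hbound : ∀ m : Fin r → ℕ+,
      ENNReal.ofReal (1 / ∏ i' : Fin r, (psum m (i'.val+1):ℝ) ^ ν i'.val)
        ≤ ∏ i' : Fin r, ENNReal.ofReal (((m i' : ℕ):ℝ) ^ (-p)) := by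
    intro m
    set K : Fin r → ℝ := fun i' => (psum m (i'.val+1) : ℝ) with hKdef
    have hK1 : ∀ i', (1:ℝ) ≤ K i' := fun i' => by
      show (1:ℝ) ≤ ((psum m (i'.val+1) : ℕ) : ℝ)
      exact_mod_cast psum_pos hr m (c := i'.val+1) (by omega)
    have hm1 : ∀ i' : Fin r, (1:ℝ) ≤ ((m i' : ℕ):ℝ) := fun i' => by
      exact_mod_cast (m i').2
    have hmK : ∀ i', ((m i' : ℕ):ℝ) ≤ K i' := fun i' => by
      show ((m i' : ℕ):ℝ) ≤ ((psum m (i'.val+1) : ℕ) : ℝ)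
      have := psum_ge_single m i'.isLt (Nat.lt_succ_self i'.val)
      simp only [Fin.eta] at this
      exact_mod_cast this
    set L : Fin r := Fin.last r' with hLdef
    have hmL : ∀ i', ((m i' : ℕ):ℝ) ≤ K L := fun i' => by
      show ((m i' : ℕ):ℝ) ≤ ((psum m ((Fin.last r').val+1) : ℕ) : ℝ)
      have := psum_ge_single m i'.isLt (show i'.val < (Fin.last r').val + 1 from by
        rw [Fin.val_last]; exact i'.isLt)
      simp only [Fin.eta] at this
      exact_mod_cast this
    set a : ℝ := ∏ i' : Fin r, ((m i' : ℕ):ℝ) with hadef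
    have ha1 : (1:ℝ) ≤ a := by
      rw [hadef]
      calc (1:ℝ) = ∏ _i' : Fin r, (1:ℝ) := by simp
        _ ≤ ∏ i' : Fin r, ((m i' : ℕ):ℝ) :=
            Finset.prod_le_prod (fun i' _ => zero_le_one) (fun i' _ => hm1 i')
    have ha0 : (0:ℝ) < a := lt_of_lt_of_le one_pos ha1
    have hs1 : (∏ i' : Fin r, ((m i' : ℕ):ℝ) ^ p) = a ^ p :=
      Real.finset_prod_rpow Finset.univ _ (fun i' _ => by positivity) p
    have haK : a ≤ K L ^ (r:ℕ) := by
      calc a ≤ ∏ _i' : Fin r, K L :=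
            Finset.prod_le_prod (fun i' _ => by positivity) (fun i' _ => hmL i')
        _ = K L ^ (r:ℕ) := by rw [Finset.prod_const, Finset.card_univ, Fintype.card_fin]
    have hs3 : a ^ (1/(r:ℝ)) ≤ K L := by
      have h1 : a ^ (1/(r:ℝ)) ≤ (K L ^ (r:ℕ)) ^ (1/(r:ℝ)) :=
        Real.rpow_le_rpow ha0.le haK (by positivity)
      have h2 : ((K L ^ (r:ℕ) : ℝ)) ^ (1/(r:ℝ)) = K L := by
        rw [← Real.rpow_natCast (K L) r, ← Real.rpow_mul (le_trans zero_le_one (hK1 L)),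
          mul_one_div, div_self (ne_of_gt hrR), Real.rpow_one]
      linarith
    have hs2 : a ^ p = a * a ^ (1/(r:ℝ)) := by
      rw [hpdef, Real.rpow_add ha0, Real.rpow_one]
    have hs5 : (∏ i' : Fin r, K i') * K L ≤ ∏ i' : Fin r, K i' ^ ν i'.val := by
      have hsplit : ∏ i' : Fin r, K i' ^ ν i'.val
          = (∏ i' : Fin r, K i') * ∏ i' : Fin r, K i' ^ (ν i'.val - 1) := by
        rw [← Finset.prod_mul_distrib]
        refine Finset.prod_congr rfl fun i' _ => ?_
        rw [← pow_succ']
        congr 1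
        have := hν i'.val (by omega)
        omega
      rw [hsplit]
      refine mul_le_mul_of_nonneg_left ?_ (Finset.prod_nonneg fun i' _ => by
        have := hK1 i'; linarith)
      calc K L = K L ^ 1 := (pow_one _).symm
        _ ≤ K L ^ (ν L.val - 1) := by
            refine pow_le_pow_right₀ (hK1 L) ?_
            have hLval : L.val = r' := rfl
            rw [hLval]
            omega
        _ ≤ ∏ i' : Fin r, K i' ^ (ν i'.val - 1) := by
            have h := Finset.prod_le_prod (s := Finset.univ)
              (f := fun i' : Fin r => if i' = L then K L ^ (ν L.val - 1) else 1)
              (g := fun i' : Fin r => K i' ^ (ν i'.val - 1))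
              (fun i' _ => by
                show (0:ℝ) ≤ if i' = L then K L ^ (ν L.val - 1) else 1
                split_ifs
                · exact pow_nonneg (by linarith [hK1 L]) _
                · exact zero_le_one)
              (fun i' _ => by
                show (if i' = L then K L ^ (ν L.val - 1) else (1:ℝ)) ≤ K i' ^ (ν i'.val - 1)
                by_cases hiL : i' = L
                · rw [if_pos hiL, hiL]
                · rw [if_neg hiL]
                  exact one_le_pow₀ (hK1 i'))
            calc K L ^ (ν L.val - 1)
                = ∏ i' : Fin r, (if i' = L then K L ^ (ν L.val - 1) else 1) := by
                  rw [Finset.prod_ite_eq' Finset.univ L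
                    (fun _ => K L ^ (ν L.val - 1))]
                  simp
              _ ≤ _ := h
    have hchain : a ^ p ≤ ∏ i' : Fin r, K i' ^ ν i'.val := by
      rw [hs2]
      calc a * a ^ (1/(r:ℝ)) ≤ a * K L := mul_le_mul_of_nonneg_left hs3 ha0.le
        _ ≤ (∏ i' : Fin r, K i') * K L := by
            refine mul_le_mul_of_nonneg_right ?_ (le_trans zero_le_one (hK1 L))
            exact Finset.prod_le_prod (fun i' _ => by positivity) (fun i' _ => hmK i')
        _ ≤ ∏ i' : Fin r, K i' ^ ν i'.val := hs5
    have hfinal : 1 / ∏ i' : Fin r, K i' ^ ν i'.val ≤ ∏ i' : Fin r, ((m i' : ℕ):ℝ) ^ (-p) := by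
      have h6 : (∏ i' : Fin r, ((m i' : ℕ):ℝ) ^ (-p)) = (a ^ p)⁻¹ := by
        rw [Real.finset_prod_rpow Finset.univ _ (fun i' _ => by positivity) (-p),
          Real.rpow_neg ha0.le]
      rw [h6, one_div]
      exact inv_anti₀ (Real.rpow_pos_of_pos ha0 p) hchain
    refine le_trans (ENNReal.ofReal_le_ofReal hfinal) (le_of_eq ?_)
    exact ENNReal.ofReal_prod_of_nonneg fun i' _ => Real.rpow_nonneg (by positivity) _
  have hSig : ∑' x : ℕ+, ENNReal.ofReal (((x:ℕ):ℝ) ^ (-p)) < ⊤ := by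
    rw [← Equiv.pnatEquivNat.symm.tsum_eq (fun x : ℕ+ => ENNReal.ofReal (((x:ℕ):ℝ) ^ (-p)))]
    have hs : Summable (fun μ : ℕ => ((μ:ℝ)+1) ^ (-p)) := by
      have h0 : Summable (fun nn : ℕ => 1/(nn:ℝ)^p) := Real.summable_one_div_nat_rpow.mpr hp1
      have h1 := (summable_nat_add_iff 1).mpr h0
      refine h1.congr fun μ => ?_
      rw [Real.rpow_neg (by positivity), one_div]
      push_cast
      ring_nf
    have hcong : ∀ μ : ℕ, ENNReal.ofReal ((((Equiv.pnatEquivNat.symm μ : ℕ+):ℕ):ℝ) ^ (-p))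
        = ENNReal.ofReal (((μ:ℝ)+1) ^ (-p)) := by
      intro μ
      congr 2
      show ((Nat.succPNat μ : ℕ):ℝ) = (μ:ℝ)+1
      push_cast [Nat.succPNat_coe]
      ring
    calc (∑' μ : ℕ, ENNReal.ofReal ((((Equiv.pnatEquivNat.symm μ : ℕ+):ℕ):ℝ) ^ (-p)))
        = ∑' μ : ℕ, ENNReal.ofReal (((μ:ℝ)+1) ^ (-p)) := by
          congr 1; funext μ; exact hcong μ
      _ = ENNReal.ofReal (∑' μ : ℕ, ((μ:ℝ)+1) ^ (-p)) :=
          (ENNReal.ofReal_tsum_of_nonneg (fun μ => by positivity) hs).symm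
      _ < ⊤ := ENNReal.ofReal_lt_top
  calc (∑' m : Fin r → ℕ+, ENNReal.ofReal
        (1 / ∏ i' : Fin r, (psum m (i'.val+1):ℝ) ^ ν i'.val))
      ≤ ∑' m : Fin r → ℕ+, ∏ i' : Fin r, ENNReal.ofReal (((m i' : ℕ):ℝ) ^ (-p)) :=
        ENNReal.tsum_le_tsum hbound
    _ = (∑' x : ℕ+, ENNReal.ofReal (((x:ℕ):ℝ) ^ (-p))) ^ r :=
        tsum_pi_prod (fun x => ENNReal.ofReal (((x:ℕ):ℝ) ^ (-p))) r
    _ < ⊤ := ENNReal.pow_lt_top hSig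



lemma sum_Iio_eq_P {r : ℕ} (n : Fin r → ℕ) (i : Fin r) :
    ∑ i' ∈ Finset.Iio i, n i' = P (fun j => if h : j < r then n ⟨j, h⟩ else 1) i.val := by
  set ν : ℕ → ℕ := fun j => if h : j < r then n ⟨j, h⟩ else 1 with hν
  set F : ℕ → ℕ := fun j => if h : j < r then (if j < i.val then n ⟨j, h⟩ else 0) else 0
    with hF
  have hIio : Finset.Iio i = Finset.univ.filter (fun x => x < i) := by
    ext x; simp
  rw [hIio, Finset.sum_filter]
  have h2 : ∀ i' : Fin r, (if i' < i then n i' else 0) = F i'.val := by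
    intro i'
    show _ = if h : i'.val < r then (if i'.val < i.val then n ⟨i'.val, h⟩ else 0) else 0
    rw [dif_pos i'.isLt, Fin.eta]
    exact if_congr Fin.lt_def rfl rfl
  rw [Finset.sum_congr rfl (fun i' _ => h2 i'), Fin.sum_univ_eq_sum_range F r]
  have h3 : ∑ j ∈ Finset.range r, F j = ∑ j ∈ Finset.range i.val, F j := by
    symm
    refine Finset.sum_subset (Finset.range_subset_range.2 i.isLt.le) ?_
    intro j hj hnj
    rw [Finset.mem_range] at hj hnj
    show (if h : j < r then (if j < i.val then n ⟨j, h⟩ else 0) else 0) = 0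
    rw [dif_pos hj, if_neg hnj]
  rw [h3]
  refine Finset.sum_congr rfl fun j hj => ?_
  rw [Finset.mem_range] at hj
  have hjr : j < r := lt_trans hj i.isLt
  show (if h : j < r then (if j < i.val then n ⟨j, h⟩ else 0) else 0)
    = if h : j < r then n ⟨j, h⟩ else 1
  rw [dif_pos hjr, dif_pos hjr, if_pos hj]

/-! ### gap equivalence -/

def kToGap {t : ℕ} (k : Fin t → ℕ+) : Fin t → ℕ+ := fun i =>
  ⟨max 1 ((k i : ℕ) - (if _h : i.val = 0 then 0 else
      (k ⟨i.val - 1, by have := i.isLt; omega⟩ : ℕ))),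
   lt_of_lt_of_le one_pos (le_max_left _ _)⟩

def gapEquiv (t : ℕ) (ht : 0 < t) : (Fin t → ℕ+) ≃ {k : Fin t → ℕ+ // StrictMono k} where
  toFun m := ⟨fun i => ⟨psum m (i.val+1), psum_pos ht m (by omega)⟩, by
    intro a c hac
    rw [Fin.lt_def] at hac
    have hlt : a.val < c.val := hac
    show (⟨psum m (a.val+1), _⟩ : ℕ+) < ⟨psum m (c.val+1), _⟩
    rw [PNat.mk_lt_mk]
    have h1 : psum m (a.val+1) ≤ psum m c.val := psum_mono m (by omega)
    have h2 : psum m (c.val+1) = psum m c.val + m ⟨c.val, c.isLt⟩ :=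
      psum_succ_of_lt m c.isLt
    have h3 : psum m c.val < psum m (c.val+1) := by
      rw [h2]; exact Nat.lt_add_of_pos_right (m ⟨c.val, c.isLt⟩).2
    omega⟩
  invFun k := kToGap k.1
  left_inv m := by
    funext i
    apply PNat.coe_injective
    show max 1 ((psum m (i.val+1)) - (if _h : i.val = 0 then 0 else
      psum m ((i.val-1)+1))) = (m i : ℕ)
    have hs : psum m (i.val+1) = psum m i.val + (m i : ℕ) := by
      have h := psum_succ_of_lt m i.isLt
      rwa [Fin.eta] at h
    have hmi := (m i).2
    by_cases h0 : i.val = 0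
    · rw [dif_pos h0]
      have hz : psum m i.val = 0 := by rw [h0]; simp [psum]
      rw [Nat.sub_zero, hs, hz, Nat.zero_add]
      have hp : 0 < ((m i : ℕ+) : ℕ) := (m i).2
      omega
    · rw [dif_neg h0, show (i.val - 1) + 1 = i.val by omega, hs,
        Nat.add_sub_cancel_left]
      have hp : 0 < ((m i : ℕ+) : ℕ) := (m i).2
      omega
  right_inv k := by
    obtain ⟨kf, hk⟩ := k
    refine Subtype.ext ?_
    funext i
    apply PNat.coe_injective
    show psum (kToGap kf) (i.val+1) = (kf i : ℕ)
    set kk : ℕ → ℕ := fun j => if h : j < t then ((kf ⟨j, h⟩ : ℕ+) : ℕ) else 0 with hkk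
    have aux : ∀ c, c ≤ t → psum (kToGap kf) c = if c = 0 then 0 else kk (c-1) := by
      intro c
      induction c with
      | zero => intro _; simp [psum]
      | succ c ihc =>
          intro hc1
          have hlt : c < t := by omega
          have e1 : kk c = ((kf ⟨c, hlt⟩ : ℕ+) : ℕ) := dif_pos hlt
          rw [psum_succ_of_lt (kToGap kf) hlt, ihc (by omega),
            if_neg (Nat.succ_ne_zero c), Nat.add_sub_cancel]
          by_cases h0 : c = 0
          · subst h0
            rw [if_pos rfl, Nat.zero_add]
            show max 1 (((kf ⟨0, hlt⟩ : ℕ+) : ℕ) - (if _h : (0:ℕ) = 0 then 0 else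
                ((kf ⟨0-1, by omega⟩ : ℕ+) : ℕ))) = kk 0
            rw [dif_pos rfl, Nat.sub_zero]
            have hp : 0 < ((kf ⟨0, hlt⟩ : ℕ+) : ℕ) := (kf ⟨0, hlt⟩).2
            omega
          · rw [if_neg h0]
            have hc1t : c - 1 < t := by omega
            have e2 : kk (c-1) = ((kf ⟨c-1, hc1t⟩ : ℕ+) : ℕ) := dif_pos hc1t
            have hlt2 : ((kf ⟨c-1, hc1t⟩ : ℕ+) : ℕ) < ((kf ⟨c, hlt⟩ : ℕ+) : ℕ) := by
              have hkk2 := hk (show (⟨c-1, hc1t⟩ : Fin t) < ⟨c, hlt⟩ from by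
                rw [Fin.mk_lt_mk]; omega)
              exact_mod_cast hkk2
            rw [e2, e1]
            show ((kf ⟨c-1, hc1t⟩ : ℕ+) : ℕ) + max 1 (((kf ⟨c, hlt⟩ : ℕ+) : ℕ)
                - (if _h : c = 0 then 0 else ((kf ⟨c-1, by omega⟩ : ℕ+) : ℕ)))
              = ((kf ⟨c, hlt⟩ : ℕ+) : ℕ)
            rw [dif_neg h0]
            show ((kf ⟨c-1, hc1t⟩ : ℕ+) : ℕ) + max 1 (((kf ⟨c, hlt⟩ : ℕ+) : ℕ)
                - ((kf ⟨c-1, hc1t⟩ : ℕ+) : ℕ)) = ((kf ⟨c, hlt⟩ : ℕ+) : ℕ)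
            omega
    have hfin : psum (kToGap kf) (i.val+1) = if i.val + 1 = 0 then 0 else kk (i.val+1-1) :=
      aux (i.val+1) i.isLt
    rw [hfin, if_neg (Nat.succ_ne_zero _), Nat.add_sub_cancel]
    exact dif_pos i.isLt


end MZVAux
open MeasureTheory

/-- Iterated-integral representation of multiple zeta values: for `n₁, …, n_r ≥ 1`
with `n_r ≥ 2` and `N = n₁ + ⋯ + n_r`, letting `ε_j = 1` exactly when `j` (0-indexed)
is one of the partial sums `0, n₁, n₁+n₂, …, n₁+⋯+n_{r−1}` (i.e. the sequence is a `1`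
followed by `n₁ − 1` zeros, then a `1` followed by `n₂ − 1` zeros, and so on), the
function `t ↦ ∏_j 1/(t_j − ε_j)` is integrable on the open ordered simplex
`{0 < t₁ < ⋯ < t_N < 1}` and
`ζ(n₁, …, n_r) = (−1)^r ∫_{0 < t₁ < ⋯ < t_N < 1} ∏_j dt_j/(t_j − ε_j)`. -/
theorem mzv_eq_iterated_integral (r : ℕ) (hr : 0 < r) (n : Fin r → ℕ)
    (hn : ∀ i, 1 ≤ n i) (hlast : 2 ≤ n ⟨r - 1, Nat.sub_lt hr Nat.one_pos⟩) :
    let N : ℕ := ∑ i, n i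
    let ε : Fin N → ℝ := fun j =>
      if ∃ i : Fin r, (j : ℕ) = ∑ i' ∈ Finset.Iio i, n i' then 1 else 0
    let S : Set (Fin N → ℝ) := {t | StrictMono t ∧ ∀ j, t j ∈ Set.Ioo (0 : ℝ) 1}
    let f : (Fin N → ℝ) → ℝ := fun t => ∏ j, 1 / (t j - ε j)
    IntegrableOn f S ∧
    (∑' k : {k : Fin r → ℕ+ // StrictMono k}, ∏ i, (1 : ℝ) / (k.1 i : ℝ) ^ n i)
      = (-1 : ℝ) ^ r * ∫ t in S, f t := by
  intro N ε S f
  obtain ⟨r', rfl⟩ : ∃ r', r = r' + 1 := ⟨r - 1, by omega⟩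
  classical
  set ν : ℕ → ℕ := fun j => if h : j < r' + 1 then n ⟨j, h⟩ else 1 with hνdef
  have hν1 : ∀ i < r' + 1, 1 ≤ ν i := by
    intro i hi
    show 1 ≤ if h : i < r' + 1 then n ⟨i, h⟩ else 1
    rw [dif_pos hi]
    exact hn _
  have hνlast : 2 ≤ ν r' := by
    show 2 ≤ if h : r' < r' + 1 then n ⟨r', h⟩ else 1
    rw [dif_pos (Nat.lt_succ_self r')]
    exact hlast
  have hNP : N = MZVAux.P ν (r' + 1) := by
    show (∑ i, n i) = MZVAux.P ν (r' + 1)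
    calc ∑ i, n i = ∑ i : Fin (r'+1), ν i.val := by
          refine Finset.sum_congr rfl fun i _ => ?_
          show n i = if h : i.val < r' + 1 then n ⟨i.val, h⟩ else 1
          rw [dif_pos i.isLt, Fin.eta]
      _ = ∑ j ∈ Finset.range (r'+1), ν j := Fin.sum_univ_eq_sum_range ν (r'+1)
      _ = MZVAux.P ν (r'+1) := rfl
  -- the condition in ε, rephrased
  have hcond : ∀ j : Fin N, (∃ i : Fin (r'+1), (j : ℕ) = ∑ i' ∈ Finset.Iio i, n i')
      ↔ (∃ i < r' + 1, (j : ℕ) = MZVAux.P ν i) := by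
    intro j
    constructor
    · rintro ⟨i, hi⟩
      exact ⟨i.val, i.isLt, by rw [hi, MZVAux.sum_Iio_eq_P n i]⟩
    · rintro ⟨iv, hiv, hj⟩
      refine ⟨⟨iv, hiv⟩, ?_⟩
      rw [hj, MZVAux.sum_Iio_eq_P n ⟨iv, hiv⟩]
  set g : ℕ → ℝ → ℝ≥0∞ := MZVAux.gfun ν (r'+1) with hgdef
  set cond : Fin N → Prop := fun j => ∃ i < r' + 1, (j : ℕ) = MZVAux.P ν i with hconddef
  set pos : (Fin N → ℝ) → ℝ :=
    fun t => ∏ j, (if cond j then 1/(1 - t j) else 1/(t j)) with hposdef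
  have hε : ∀ j, ε j = if cond j then 1 else 0 := by
    intro j
    show (if ∃ i : Fin (r'+1), (j : ℕ) = ∑ i' ∈ Finset.Iio i, n i' then (1:ℝ) else 0) = _
    exact if_congr (hcond j) rfl rfl
  have hsplit : ∀ t : Fin N → ℝ, f t = (∏ j, (if cond j then (-1:ℝ) else 1)) * pos t := by
    intro t
    show (∏ j, 1 / (t j - ε j)) = _
    rw [hposdef, ← Finset.prod_mul_distrib]
    refine Finset.prod_congr rfl fun j _ => ?_
    rw [hε j]
    by_cases hc : cond j
    · rw [if_pos hc, if_pos hc, if_pos hc,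
        show t j - (1:ℝ) = -(1 - t j) by ring, div_neg]
      ring
    · rw [if_neg hc, if_neg hc, if_neg hc, sub_zero]
      ring
  have hPlt : ∀ iv, iv < r'+1 → MZVAux.P ν iv < N := by
    intro iv hiv
    rw [hNP]
    have h1 : MZVAux.P ν (iv+1) ≤ MZVAux.P ν (r'+1) := MZVAux.P_mono ν (by omega)
    have h2 := MZVAux.P_succ ν iv
    have h3 := hν1 iv hiv
    omega
  have hsign : (∏ j, (if cond j then (-1:ℝ) else 1)) = (-1:ℝ)^(r'+1) := by
    rw [Finset.prod_ite, Finset.prod_const, Finset.prod_const, one_pow, mul_one]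
    congr 1
    set φ : Fin (r'+1) → Fin N := fun i => ⟨MZVAux.P ν i.val, hPlt i.val i.isLt⟩ with hφ
    have hPinj : ∀ a b, a < r'+1 → b < r'+1 → MZVAux.P ν a = MZVAux.P ν b → a = b := by
      intro a b ha hb hab
      by_contra hne
      rcases Nat.lt_or_ge a b with h | h
      · have h1 := MZVAux.P_succ ν a
        have h2 : MZVAux.P ν (a+1) ≤ MZVAux.P ν b := MZVAux.P_mono ν (by omega)
        have h3 := hν1 a ha
        omega
      · have hba : b < a := by omega
        have h1 := MZVAux.P_succ ν b
        have h2 : MZVAux.P ν (b+1) ≤ MZVAux.P ν a := MZVAux.P_mono ν (by omega)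
        have h3 := hν1 b hb
        omega
    have hφinj : Function.Injective φ := by
      intro a b hab
      exact Fin.ext (hPinj a.val b.val a.isLt b.isLt (congrArg Fin.val hab))
    have hfilter : Finset.univ.filter (fun j => cond j) = Finset.univ.image φ := by
      ext j
      simp only [Finset.mem_filter, Finset.mem_univ, true_and, Finset.mem_image]
      constructor
      · intro hcj
        obtain ⟨iv, hiv, hj⟩ := hcj
        exact ⟨⟨iv, hiv⟩, Fin.ext hj.symm⟩
      · rintro ⟨i, _, rfl⟩
        show ∃ iv < r'+1, ((φ i : Fin N) : ℕ) = MZVAux.P ν iv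
        exact ⟨i.val, i.isLt, rfl⟩
    rw [hfilter, Finset.card_image_of_injective _ hφinj, Finset.card_univ, Fintype.card_fin]
  have hSmeas : MeasurableSet S := MZVAux.measurableSet_Sim N 1
  have hposg : ∀ t ∈ S, ENNReal.ofReal (pos t) = ∏ j : Fin N, g (j:ℕ) (t j) := by
    intro t ht
    obtain ⟨hmono, hbox⟩ := ht
    rw [hposdef, ENNReal.ofReal_prod_of_nonneg]
    · refine Finset.prod_congr rfl fun j _ => ?_
      rw [hgdef]
      by_cases hc : cond j
      · rw [if_pos hc]
        show _ = MZVAux.gfun ν (r'+1) (j:ℕ) (t j)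
        unfold MZVAux.gfun
        rw [if_pos hc]
      · rw [if_neg hc]
        show _ = MZVAux.gfun ν (r'+1) (j:ℕ) (t j)
        unfold MZVAux.gfun
        rw [if_neg hc]
    · intro j _
      by_cases hc : cond j
      · rw [if_pos hc]
        have h1 : (0:ℝ) ≤ 1 - t j := by have := (hbox j).2; linarith
        exact div_nonneg zero_le_one h1
      · rw [if_neg hc]
        exact div_nonneg zero_le_one (le_of_lt (hbox j).1)
  have hposnn : ∀ t ∈ S, 0 ≤ pos t := by
    intro t ht
    obtain ⟨hmono, hbox⟩ := ht
    show (0:ℝ) ≤ ∏ j, (if cond j then 1/(1 - t j) else 1/(t j))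
    refine Finset.prod_nonneg fun j _ => ?_
    by_cases hc : cond j
    · rw [if_pos hc]
      have h1 : (0:ℝ) ≤ 1 - t j := by have := (hbox j).2; linarith
      exact div_nonneg zero_le_one h1
    · rw [if_neg hc]
      exact div_nonneg zero_le_one (le_of_lt (hbox j).1)
  have hgmeas : ∀ j, Measurable (g j) := by
    rw [hgdef]; exact MZVAux.gfun_measurable ν (r'+1)
  set Tval : ℝ≥0∞ := ∑' m : Fin (r'+1) → ℕ+,
    ENNReal.ofReal (1 / ∏ i' : Fin (r'+1), (MZVAux.psum m (i'.val+1) : ℝ) ^ ν i'.val) with hT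
  have hTlt : Tval < ⊤ := MZVAux.T_lt_top ν r' hν1 hνlast
  have hlint : (∫⁻ t in S, ∏ j : Fin N, g (j:ℕ) (t j)) = Tval := by
    have h1 : (∫⁻ t in S, ∏ j : Fin N, g (j:ℕ) (t j)) = MZVAux.It g N 1 :=
      MZVAux.lintegral_Sim g hgmeas N 1
    rw [h1, hgdef,
      show N = MZVAux.P ν r' + ν r' from by rw [hNP]; exact MZVAux.P_succ ν r',
      MZVAux.It_eq ν (r'+1) (Nat.succ_pos r') hν1 r' (Nat.lt_succ_self r') (ν r')
        (hν1 r' (Nat.lt_succ_self r')) (le_refl _) 1 ⟨one_pos, le_refl 1⟩, hT]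
    refine tsum_congr fun m => ?_
    show MZVAux.term ν r' (ν r') 1 m = _
    unfold MZVAux.term
    rw [MZVAux.denom_full, one_pow]
  have hfmeas : Measurable f := by
    show Measurable fun t : Fin N → ℝ => ∏ j, 1 / (t j - ε j)
    refine Finset.measurable_prod _ fun j _ => ?_
    have he : (fun t : Fin N → ℝ => 1 / (t j - ε j)) = fun t => (t j - ε j)⁻¹ := by
      funext t; rw [one_div]
    rw [he]
    exact ((measurable_pi_apply j).sub measurable_const).inv
  have habs : ∀ t ∈ S, |f t| = pos t := by
    intro t ht
    rw [hsplit t, hsign, abs_mul, abs_pow, abs_neg, abs_one, one_pow, one_mul,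
      abs_of_nonneg (hposnn t ht)]
  have hint : IntegrableOn f S := by
    refine ⟨hfmeas.aestronglyMeasurable, ?_⟩
    show (∫⁻ t in S, (‖f t‖₊ : ℝ≥0∞)) < ⊤
    have hcong : (∫⁻ t in S, (‖f t‖₊ : ℝ≥0∞)) = ∫⁻ t in S, ∏ j : Fin N, g (j:ℕ) (t j) :=
      setLIntegral_congr_fun hSmeas (fun t ht => by
        rw [← enorm_eq_nnnorm, Real.enorm_eq_ofReal_abs, habs t ht, hposg t ht])
    rw [hcong, hlint]
    exact hTlt
  have hposmeas : Measurable pos := by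
    show Measurable fun t : Fin N → ℝ => ∏ j, (if cond j then 1/(1 - t j) else 1/(t j))
    refine Finset.measurable_prod _ fun j _ => ?_
    by_cases hc : cond j
    · simp only [if_pos hc]
      have he : (fun t : Fin N → ℝ => 1/(1 - t j)) = fun t => (1 - t j)⁻¹ := by
        funext t; rw [one_div]
      rw [he]
      exact (measurable_const.sub (measurable_pi_apply j)).inv
    · simp only [if_neg hc]
      have he : (fun t : Fin N → ℝ => 1/(t j)) = fun t => (t j)⁻¹ := by
        funext t; rw [one_div]
      rw [he]
      exact (measurable_pi_apply j).inv
  have hIv : ∫ t in S, f t = (-1:ℝ)^(r'+1) * Tval.toReal := by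
    have h1 : ∫ t in S, f t = ∫ t in S, (-1:ℝ)^(r'+1) * pos t :=
      setIntegral_congr_fun hSmeas (fun t ht => by rw [hsplit t, hsign])
    rw [h1, integral_const_mul]
    congr 1
    rw [integral_eq_lintegral_of_nonneg_ae ?_ hposmeas.aestronglyMeasurable]
    · have h2 : (∫⁻ t in S, ENNReal.ofReal (pos t)) = Tval := by
        rw [setLIntegral_congr_fun hSmeas (fun t ht => hposg t ht), hlint]
      rw [h2]
    · filter_upwards [ae_restrict_mem hSmeas] with t ht
      exact hposnn t ht
  have hts : (∑' k : {k : Fin (r'+1) → ℕ+ // StrictMono k}, ∏ i, (1:ℝ)/(k.1 i:ℝ)^(n i))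
      = Tval.toReal := by
    set u : (Fin (r'+1) → ℕ+) → ℝ := fun m =>
      1 / ∏ i' : Fin (r'+1), (MZVAux.psum m (i'.val+1) : ℝ) ^ ν i'.val with hu
    have hunn : ∀ m, 0 ≤ u m := fun m => by
      show (0:ℝ) ≤ 1 / ∏ i' : Fin (r'+1), (MZVAux.psum m (i'.val+1) : ℝ) ^ ν i'.val
      positivity
    have hTu : Tval = ∑' m, ENNReal.ofReal (u m) := rfl
    have h1 : (∑' k : {k : Fin (r'+1) → ℕ+ // StrictMono k}, ∏ i, (1:ℝ)/(k.1 i:ℝ)^(n i))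
        = ∑' m : Fin (r'+1) → ℕ+, u m := by
      rw [← (MZVAux.gapEquiv (r'+1) (Nat.succ_pos r')).tsum_eq
        (fun k : {k : Fin (r'+1) → ℕ+ // StrictMono k} => ∏ i, (1:ℝ)/(k.1 i:ℝ)^(n i))]
      refine tsum_congr fun m => ?_
      show (∏ i, (1:ℝ)/((((MZVAux.gapEquiv (r'+1) (Nat.succ_pos r')) m).1 i : ℕ+):ℝ)^(n i))
        = 1 / ∏ i' : Fin (r'+1), (MZVAux.psum m (i'.val+1) : ℝ) ^ ν i'.val
      rw [one_div, ← Finset.prod_inv_distrib]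
      refine Finset.prod_congr rfl fun i _ => ?_
      have he : ν i.val = n i := by
        show (if h : i.val < r' + 1 then n ⟨i.val, h⟩ else 1) = n i
        rw [dif_pos i.isLt, Fin.eta]
      rw [one_div, he]
      rfl
    have hsummable : Summable u := by
      have h := ENNReal.summable_toReal
        (show (∑' m, ENNReal.ofReal (u m)) ≠ ⊤ from hTu ▸ ne_of_lt hTlt)
      exact h.congr fun m => ENNReal.toReal_ofReal (hunn m)
    have h2 : ENNReal.ofReal (∑' m, u m) = Tval := by
      rw [ENNReal.ofReal_tsum_of_nonneg hunn hsummable]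
    rw [h1, ← ENNReal.toReal_ofReal (tsum_nonneg hunn), h2]
  refine ⟨hint, ?_⟩
  rw [hts, hIv, ← mul_assoc]
  have hone : (-1:ℝ)^(r'+1) * (-1:ℝ)^(r'+1) = 1 := by
    rw [← pow_add]
    exact Even.neg_one_pow ⟨r'+1, by ring⟩
  rw [hone, one_mul]
end

section
/- Let G be a finite connected simple graph and let γ be a connected subgraph of G with vertex set V(γ) (nonempty) and edge set E(γ). Then for every spanning tree T of G, the number of edges of γ not contained in T satisfies |E(γ) ∖ E(T)| ≥ h_γ := |E(γ)| − |V(γ)| + 1. Consequently, every monomial of the first Symanzik polynomial Ψ_G = Σ_T ∏_{e ∈ E(G) ∖ E(T)} X_e has total degree at least h_γ in the variables {X_e : e ∈ E(γ)}. -/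
open scoped Classical
open MvPolynomial

private lemma aux_exists_isTree_ge {W : Type} [Fintype W] [DecidableEq W] [Nonempty W] :
    ∀ (n : ℕ) (A : SimpleGraph W), (Fintype.card W).choose 2 - A.edgeSet.ncard ≤ n →
      A.IsAcyclic → ∃ T : SimpleGraph W, A ≤ T ∧ T.IsTree := by
  intro n
  induction n with
  | zero =>
    intro A hn hA
    by_cases hc : A.Connected
    · exact ⟨A, le_refl A, ⟨hc, hA⟩⟩
    · exfalso
      have hpc : ¬ A.Preconnected := fun h => hc ⟨h⟩
      rw [SimpleGraph.Preconnected] at hpc; push_neg at hpc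
      obtain ⟨u, v, hr⟩ := hpc
      have hne : u ≠ v := fun h => hr (h ▸ SimpleGraph.Reachable.refl u)
      have hnadj : ¬ A.Adj u v := fun h => hr h.reachable
      have hcard := SimpleGraph.card_edgeFinset_sup_edge (G := A) (s := u) (t := v) hnadj hne
      have h1 : (A ⊔ SimpleGraph.edge u v).edgeFinset.card ≤ (Fintype.card W).choose 2 :=
        SimpleGraph.card_edgeFinset_le_card_choose_two
      simp only [SimpleGraph.edgeFinset, ← Set.ncard_eq_toFinset_card'] at hcard h1
      omega
  | succ n ih =>
    intro A hn hA
    by_cases hc : A.Connected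
    · exact ⟨A, le_refl A, ⟨hc, hA⟩⟩
    · have hpc : ¬ A.Preconnected := fun h => hc ⟨h⟩
      rw [SimpleGraph.Preconnected] at hpc; push_neg at hpc
      obtain ⟨u, v, hr⟩ := hpc
      have hne : u ≠ v := fun h => hr (h ▸ SimpleGraph.Reachable.refl u)
      have hnadj : ¬ A.Adj u v := fun h => hr h.reachable
      set A' := A ⊔ SimpleGraph.edge u v with hA'def
      have hle : A'.deleteEdges {s(u,v)} ≤ A := by
        intro a b hab
        rw [SimpleGraph.deleteEdges_adj] at hab
        obtain ⟨hab1, hab2⟩ := hab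
        rcases hab1 with h | h
        · exact h
        · exfalso
          rw [SimpleGraph.edge_adj] at h
          apply hab2
          rcases h.1 with ⟨rfl, rfl⟩ | ⟨rfl, rfl⟩
          · rfl
          · exact Sym2.eq_swap
      have hA'acyc : A'.IsAcyclic := by
        intro x c hcyc
        by_cases he : s(u, v) ∈ c.edges
        · have hreach : A'.Adj u v ∧ ((A'.deleteEdges {s(u,v)}).Reachable u v) :=
            (SimpleGraph.adj_and_reachable_delete_edges_iff_exists_cycle).mpr ⟨x, c, hcyc, he⟩
          exact hr (hreach.2.mono hle)
        · have hsub : ∀ e ∈ c.edges, e ∈ A.edgeSet := by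
            intro e hce
            have heA' : e ∈ A'.edgeSet := c.edges_subset_edgeSet hce
            rw [hA'def, SimpleGraph.edgeSet_sup] at heA'
            rcases heA' with h | h
            · exact h
            · exfalso
              induction e using Sym2.ind with
              | _ a b =>
                rw [SimpleGraph.mem_edgeSet, SimpleGraph.edge_adj] at h
                apply he
                rcases h.1 with ⟨rfl, rfl⟩ | ⟨rfl, rfl⟩
                · exact hce
                · exact Sym2.eq_swap ▸ hce
          exact hA (c.transfer A hsub) (hcyc.transfer hsub)
      have hcard := SimpleGraph.card_edgeFinset_sup_edge (G := A) (s := u) (t := v) hnadj hne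
      have h1 : A'.edgeFinset.card ≤ (Fintype.card W).choose 2 :=
        SimpleGraph.card_edgeFinset_le_card_choose_two
      simp only [SimpleGraph.edgeFinset, ← Set.ncard_eq_toFinset_card'] at hcard h1
      obtain ⟨T, hT1, hT2⟩ := ih (A ⊔ SimpleGraph.edge u v) (by rw [hA'def] at h1; omega) hA'acyc
      exact ⟨T, le_trans le_sup_left hT1, hT2⟩

private lemma acyclic_card_edge {W : Type} [Fintype W] [DecidableEq W] [Nonempty W]
    (A : SimpleGraph W) (hA : A.IsAcyclic) : A.edgeFinset.card + 1 ≤ Fintype.card W := by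
  obtain ⟨T, hle, hT⟩ := aux_exists_isTree_ge ((Fintype.card W).choose 2) A (by omega) hA
  have h1 := hT.card_edgeFinset
  have h2 : A.edgeFinset.card ≤ T.edgeFinset.card :=
    Finset.card_le_card (SimpleGraph.edgeFinset_mono hle)
  simp only [SimpleGraph.edgeFinset, ← Set.ncard_eq_toFinset_card'] at h1 h2 ⊢
  omega

private lemma prod_X_eq_monomial' {σ : Type} [DecidableEq σ] (s : Finset σ) :
    (∏ e ∈ s, (X e : MvPolynomial σ ℚ)) = monomial (∑ e ∈ s, Finsupp.single e 1) 1 := by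
  induction s using Finset.induction_on with
  | empty => simp
  | insert a s h ih =>
    rw [Finset.prod_insert h, Finset.sum_insert h, ih, X, monomial_mul, mul_one]

/-- Let `γ` (formalized as a subgraph `H` of `G`) be a connected subgraph of a finite
connected simple graph `G`, with nonempty vertex set.  Then for every spanning tree `T`
of `G` (identified with its edge set), `|E(γ) ∖ E(T)| ≥ h_γ = |E(γ)| − |V(γ)| + 1`.
Consequently every monomial of the first Symanzik polynomial
`Ψ_G = Σ_T ∏_{e ∉ E(T)} X_e` has total degree at least `h_γ` in the variables
`{X_e : e ∈ E(γ)}`. -/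
theorem symanzik_min_degree_in_subgraph_variables (V : Type) [Fintype V] [DecidableEq V]
    (G : SimpleGraph V) [Fintype G.edgeSet] (hG : G.Connected)
    (H : G.Subgraph) (hH : H.Connected) (hne : H.verts.Nonempty) :
    let hγ : ℕ := H.edgeSet.ncard + 1 - H.verts.ncard
    let trees : Finset (Finset (Sym2 V)) :=
      G.edgeFinset.powerset.filter
        (fun T => (SimpleGraph.fromEdgeSet (T : Set (Sym2 V))).IsTree)
    let Ψ : MvPolynomial (Sym2 V) ℚ :=
      ∑ T ∈ trees, ∏ e ∈ G.edgeFinset \ T, X e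
    (∀ T ∈ trees, hγ ≤ (H.edgeSet \ (T : Set (Sym2 V))).ncard) ∧
    ∀ m ∈ Ψ.support, hγ ≤ ∑ e ∈ m.support.filter (fun e => e ∈ H.edgeSet), m e := by
  intro hγ trees Ψ
  have hEfin : H.edgeSet.Finite := Set.Finite.subset G.edgeSet.toFinite H.edgeSet_subset
  have key : ∀ T ∈ trees, hγ ≤ (H.edgeSet \ (T : Set (Sym2 V))).ncard := by
    intro T hT
    rw [Finset.mem_filter, Finset.mem_powerset] at hT
    obtain ⟨hTsub, hTtree⟩ := hT
    have hneW : Nonempty ↥H.verts := hne.to_subtype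
    set A : SimpleGraph ↥H.verts :=
      { Adj := fun u v => (SimpleGraph.fromEdgeSet (T : Set (Sym2 V))).Adj u.1 v.1 ∧ H.Adj u.1 v.1
        symm := ⟨fun u v h => ⟨h.1.symm, h.2.symm⟩⟩
        loopless := ⟨fun u h => (SimpleGraph.irrefl _) h.1⟩ } with hAdef
    have hAacyc : A.IsAcyclic := by
      intro x c hcyc
      let hhom : A →g SimpleGraph.fromEdgeSet (T : Set (Sym2 V)) :=
        ⟨Subtype.val, fun h => h.1⟩
      have hinj : Function.Injective ⇑hhom := Subtype.val_injective
      exact hTtree.IsAcyclic (c.map hhom)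
        ((SimpleGraph.Walk.map_isCycle_iff_of_injective hinj).mpr hcyc)
    have hcardA := acyclic_card_edge A hAacyc
    simp only [SimpleGraph.edgeFinset, ← Set.ncard_eq_toFinset_card'] at hcardA
    have hV : H.verts.ncard = Fintype.card ↥H.verts := by
      rw [← Nat.card_coe_set_eq, Nat.card_eq_fintype_card]
    have hinter : (H.edgeSet ∩ (T : Set (Sym2 V))).ncard ≤ A.edgeSet.ncard := by
      have hsub2 : H.edgeSet ∩ (T : Set (Sym2 V)) ⊆ Sym2.map Subtype.val '' A.edgeSet := by
        rintro e ⟨heH, heT⟩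
        induction e using Sym2.ind with
        | _ a b =>
          rw [SimpleGraph.Subgraph.mem_edgeSet] at heH
          have ha : a ∈ H.verts := H.edge_vert heH
          have hb : b ∈ H.verts := H.edge_vert heH.symm
          refine ⟨s(⟨a, ha⟩, ⟨b, hb⟩), ?_, Sym2.map_pair_eq _ _ _⟩
          rw [SimpleGraph.mem_edgeSet]
          exact ⟨(SimpleGraph.fromEdgeSet_adj _).mpr ⟨heT, (H.adj_sub heH).ne⟩, heH⟩
      calc (H.edgeSet ∩ (T : Set (Sym2 V))).ncard
          ≤ (Sym2.map Subtype.val '' A.edgeSet).ncard :=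
            Set.ncard_le_ncard hsub2 (A.edgeSet.toFinite.image _)
        _ = A.edgeSet.ncard :=
            Set.ncard_image_of_injective _ (Sym2.map.injective Subtype.val_injective)
    have hsplit := Set.ncard_inter_add_ncard_diff_eq_ncard H.edgeSet (T : Set (Sym2 V)) hEfin
    have hpos : 1 ≤ Fintype.card ↥H.verts := Fintype.card_pos
    show H.edgeSet.ncard + 1 - H.verts.ncard ≤ _
    omega
  refine ⟨key, ?_⟩
  intro m hm
  obtain ⟨T, hT, hmT⟩ := Finset.mem_biUnion.mp (MvPolynomial.support_sum hm)
  rw [prod_X_eq_monomial', MvPolynomial.support_monomial] at hmT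
  simp only [one_ne_zero, if_false, Finset.mem_singleton] at hmT
  subst hmT
  have hsupp : (∑ e ∈ G.edgeFinset \ T, Finsupp.single e (1:ℕ)).support = G.edgeFinset \ T := by
    rw [Finsupp.support_sum_eq_biUnion _
      (fun i1 i2 hne12 => by
        rw [Finsupp.support_single_ne_zero _ one_ne_zero,
          Finsupp.support_single_ne_zero _ one_ne_zero]
        simpa using hne12)]
    simp [Finsupp.support_single_ne_zero _ one_ne_zero]
  have h1 : hγ ≤ (H.edgeSet \ (T : Set (Sym2 V))).ncard := key T hT
  have hsetseq : H.edgeSet \ (T : Set (Sym2 V)) =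
      ↑((G.edgeFinset \ T).filter (fun e => e ∈ H.edgeSet)) := by
    ext e
    simp only [Set.mem_diff, Finset.coe_filter, Finset.mem_sdiff, Set.mem_setOf_eq,
      SimpleGraph.mem_edgeFinset, Finset.mem_coe]
    have := H.edgeSet_subset
    constructor
    · rintro ⟨h1, h2⟩; exact ⟨⟨this h1, h2⟩, h1⟩
    · rintro ⟨⟨_, h2⟩, h3⟩; exact ⟨h3, h2⟩
  rw [hsetseq, Set.ncard_coe_finset] at h1
  refine h1.trans ?_
  rw [hsupp]
  have hone : ∀ e ∈ (G.edgeFinset \ T).filter (fun e => e ∈ H.edgeSet),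
      1 ≤ (∑ e ∈ G.edgeFinset \ T, Finsupp.single e (1:ℕ)) e := by
    intro e he
    have heS : e ∈ G.edgeFinset \ T := Finset.mem_filter.mp he |>.1
    have : e ∈ (∑ e ∈ G.edgeFinset \ T, Finsupp.single e (1:ℕ)).support := by
      rw [hsupp]; exact heS
    exact Nat.one_le_iff_ne_zero.mpr (Finsupp.mem_support_iff.mp this)
  calc ((G.edgeFinset \ T).filter (fun e => e ∈ H.edgeSet)).card
      = ∑ _e ∈ (G.edgeFinset \ T).filter (fun e => e ∈ H.edgeSet), 1 := by
        rw [Finset.card_eq_sum_ones]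
    _ ≤ _ := Finset.sum_le_sum hone
end

section
/- Let G be a finite connected simple graph and let γ be a connected subgraph of G with vertex set V(γ) and edge set E(γ). Fix any spanning tree T₀ of γ and let 𝒮 = {F ⊆ E(G) ∖ E(γ) : E(T₀) ∪ F is the edge set of a spanning tree of G} (this set does not depend on the choice of T₀). Then in the polynomial ring ℚ[X_e : e ∈ E(G)] one has the identity Σ_{T : |E(T) ∩ E(γ)| = |V(γ)| − 1} ∏_{e ∈ E(G) ∖ E(T)} X_e = Ψ_γ · ( Σ_{F ∈ 𝒮} ∏_{e ∈ (E(G) ∖ E(γ)) ∖ F} X_e ), where the left-hand sum is over all spanning trees T of G whose intersection with E(γ) has exactly |V(γ)| − 1 edges, and Ψ_γ = Σ_{T'} ∏_{e ∈ E(γ) ∖ E(T')} X_e is the first Symanzik polynomial of γ (sum over spanning trees T' of γ). In other words, the part of Ψ_G of lowest degree in the variables {X_e : e ∈ E(γ)} factorizes as Ψ_γ · Ψ_{G/γ}, which is the partial factorization Ψ_G = Ψ_γ Ψ_{G/γ} + R_{γ,G} with R_{γ,G} of strictly higher degree in the γ-edge variables. -/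
open scoped Classical
open MvPolynomial


set_option linter.unusedSectionVars false
set_option linter.unusedVariables false

section AuxLemmas
open SimpleGraph

variable {W : Type} [Fintype W] [DecidableEq W]

lemma acyclic_anti {Γ Γ' : SimpleGraph W} (h : Γ ≤ Γ') (ha : Γ'.IsAcyclic) : Γ.IsAcyclic := by
  intro v c hc
  exact ha (c.mapLe h) (hc.mapLe h)

lemma reachable_of_adj_reachable {Γ₁ Γ₂ : SimpleGraph W}
    (h : ∀ v w, Γ₁.Adj v w → Γ₂.Reachable v w) {a b : W} (hr : Γ₁.Reachable a b) :
    Γ₂.Reachable a b := by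
  obtain ⟨p⟩ := hr
  induction p with
  | nil => exact SimpleGraph.Reachable.refl _
  | cons ha p ih => exact (h _ _ ha).trans ih

lemma edgeFinset_fromEdgeSet (s : Finset (Sym2 W)) (hd : ∀ e ∈ s, ¬ e.IsDiag) :
    (SimpleGraph.fromEdgeSet (s : Set (Sym2 W))).edgeFinset = s := by
  ext e
  simp only [SimpleGraph.mem_edgeFinset, SimpleGraph.edgeSet_fromEdgeSet, Set.mem_diff,
    Finset.mem_coe, Set.mem_setOf_eq]
  exact ⟨fun h => h.1, fun h => ⟨h, hd e h⟩⟩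



lemma fromEdgeSet_erase_eq (s : Finset (Sym2 W)) (e : Sym2 W) :
    SimpleGraph.fromEdgeSet ((s.erase e : Finset (Sym2 W)) : Set (Sym2 W))
      = (SimpleGraph.fromEdgeSet (s : Set (Sym2 W))) \ fromEdgeSet {e} := by
  ext v w
  simp only [fromEdgeSet_adj, Finset.coe_erase, Set.mem_diff, sdiff_adj, Set.mem_singleton_iff,
    Finset.mem_coe]
  constructor
  · rintro ⟨⟨h1, h2⟩, h3⟩
    exact ⟨⟨h1, h3⟩, fun hc => h2 hc.1⟩
  · rintro ⟨⟨h1, h3⟩, h2⟩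
    exact ⟨⟨h1, fun hc => h2 ⟨hc, h3⟩⟩, h3⟩

lemma acyclic_insert {Γ : SimpleGraph W} (ha : Γ.IsAcyclic) {v w : W} (hvw : v ≠ w)
    (hnr : ¬ Γ.Reachable v w) :
    (Γ ⊔ SimpleGraph.fromEdgeSet {s(v, w)}).IsAcyclic := by
  set Γ' := Γ ⊔ SimpleGraph.fromEdgeSet {s(v, w)} with hΓ'
  have hdel : Γ' \ fromEdgeSet {s(v, w)} = Γ := by
    ext x y
    simp only [hΓ', sdiff_adj, sup_adj, fromEdgeSet_adj, Set.mem_singleton_iff]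
    constructor
    · rintro ⟨h1 | h1, h2⟩
      · exact h1
      · exact absurd ⟨h1.1, h1.2⟩ h2
    · intro h
      refine ⟨Or.inl h, fun hc' => ?_⟩
      obtain ⟨hc, -⟩ := hc'
      rw [Sym2.eq_iff] at hc
      rcases hc with ⟨rfl, rfl⟩ | ⟨rfl, rfl⟩
      · exact hnr h.reachable
      · exact hnr h.reachable.symm
  have hbridge : Γ'.IsBridge s(v, w) := by
    rw [isBridge_iff, deleteEdges]
    rw [hdel]
    exact hnr
  intro u c hc
  have hnot : s(v, w) ∉ c.edges := by
    exact hbridge.notMem_edges_of_isCycle hc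
  have htr : ∀ f ∈ c.edges, f ∈ Γ.edgeSet := by
    intro f hf
    have h1 : f ∈ Γ'.edgeSet := c.edges_subset_edgeSet hf
    rw [hΓ', edgeSet_sup] at h1
    rcases h1 with h1 | h1
    · exact h1
    · exfalso
      have : f = s(v, w) := by
        have := edgeSet_fromEdgeSet ({s(v,w)} : Set (Sym2 W))
        rw [this] at h1
        exact h1.1
      exact hnot (this ▸ hf)
  exact ha (c.transfer Γ htr) (hc.transfer htr)

lemma isAcyclic_of_connected_card (Γ : SimpleGraph W) [Fintype Γ.edgeSet] (hc : Γ.Connected)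
    (hcard : Γ.edgeFinset.card + 1 = Fintype.card W) : Γ.IsAcyclic := by
  set 𝒯 : Finset (Finset (Sym2 W)) :=
    Γ.edgeFinset.powerset.filter (fun t => (SimpleGraph.fromEdgeSet (t : Set (Sym2 W))).Connected)
    with h𝒯
  have hΓmem : Γ.edgeFinset ∈ 𝒯 := by
    rw [h𝒯, Finset.mem_filter, Finset.mem_powerset]
    refine ⟨Finset.Subset.refl _, ?_⟩
    rw [Γ.coe_edgeFinset, Γ.fromEdgeSet_edgeSet]
    exact hc
  obtain ⟨t, htmem, htmin⟩ := Finset.exists_minimal ⟨_, hΓmem⟩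
  rw [h𝒯, Finset.mem_filter, Finset.mem_powerset] at htmem
  obtain ⟨htsub, htc⟩ := htmem
  have hnd : ∀ e ∈ t, ¬ e.IsDiag := fun e he =>
    Γ.not_isDiag_of_mem_edgeSet (SimpleGraph.mem_edgeFinset.mp (htsub he))
  have hac : (SimpleGraph.fromEdgeSet (t : Set (Sym2 W))).IsAcyclic := by
    rw [isAcyclic_iff_forall_adj_isBridge]
    intro x y hadj
    by_contra hnb
    rw [isBridge_iff, deleteEdges] at hnb
    push_neg at hnb
    have hre := hnb
    rw [← fromEdgeSet_erase_eq] at hre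
    have hmem : s(x, y) ∈ t := by
      rw [fromEdgeSet_adj] at hadj; exact hadj.1
    have hconn' : (SimpleGraph.fromEdgeSet ((t.erase s(x, y) : Finset (Sym2 W)) : Set (Sym2 W))).Connected := by
      have hpre : (SimpleGraph.fromEdgeSet ((t.erase s(x, y) : Finset (Sym2 W)) : Set (Sym2 W))).Preconnected := by
        intro a b
        refine reachable_of_adj_reachable (fun v' w' hadj' => ?_) (htc.preconnected a b)
        rw [fromEdgeSet_adj] at hadj'
        by_cases he : s(v', w') = s(x, y)
        · rw [Sym2.eq_iff] at he
          rcases he with ⟨rfl, rfl⟩ | ⟨rfl, rfl⟩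
          · exact hre
          · exact hre.symm
        · exact SimpleGraph.Adj.reachable
            (by rw [fromEdgeSet_adj]; exact ⟨by simp [Finset.mem_erase, he, hadj'.1], hadj'.2⟩)
      haveI := hc.nonempty
      exact ⟨hpre⟩
    have : t.erase s(x, y) ∈ 𝒯 := by
      rw [h𝒯, Finset.mem_filter, Finset.mem_powerset]
      exact ⟨(Finset.erase_subset _ _).trans htsub, hconn'⟩
    exact absurd (htmin this (Finset.erase_subset _ _)) (Finset.erase_ssubset hmem).not_subset
  have htree : (SimpleGraph.fromEdgeSet (t : Set (Sym2 W))).IsTree := ⟨htc, hac⟩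
  have hcard' := htree.card_edgeFinset
  rw [edgeFinset_fromEdgeSet t hnd] at hcard'
  have : t = Γ.edgeFinset := Finset.eq_of_subset_of_card_le htsub (by omega)
  rw [this, Γ.coe_edgeFinset, Γ.fromEdgeSet_edgeSet] at hac
  exact hac

lemma connected_of_acyclic_card (Γ : SimpleGraph W) [Fintype Γ.edgeSet] (ha : Γ.IsAcyclic)
    (hcard : Γ.edgeFinset.card + 1 = Fintype.card W) : Γ.Connected := by
  haveI : Nonempty W := Fintype.card_pos_iff.mp (by omega)
  set 𝒯 : Finset (Finset (Sym2 W)) :=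
    (Finset.univ.filter (fun e : Sym2 W => ¬ e.IsDiag)).powerset.filter
      (fun t => Γ.edgeFinset ⊆ t ∧ (SimpleGraph.fromEdgeSet (t : Set (Sym2 W))).IsAcyclic)
    with h𝒯
  have hΓmem : Γ.edgeFinset ∈ 𝒯 := by
    rw [h𝒯, Finset.mem_filter, Finset.mem_powerset]
    refine ⟨fun e he => ?_, Finset.Subset.refl _, ?_⟩
    · simp only [Finset.mem_filter, Finset.mem_univ, true_and]
      exact Γ.not_isDiag_of_mem_edgeSet (SimpleGraph.mem_edgeFinset.mp he)
    · rw [Γ.coe_edgeFinset, Γ.fromEdgeSet_edgeSet]; exact ha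
  obtain ⟨t, htmem, htmax⟩ := Finset.exists_maximal ⟨_, hΓmem⟩
  rw [h𝒯, Finset.mem_filter, Finset.mem_powerset] at htmem
  obtain ⟨htnd', htsub, htac⟩ := htmem
  have htnd : ∀ e ∈ t, ¬ e.IsDiag := fun e he => by
    have := htnd' he; simp only [Finset.mem_filter, Finset.mem_univ, true_and] at this; exact this
  have htc : (SimpleGraph.fromEdgeSet (t : Set (Sym2 W))).Connected := by
    refine ⟨fun v w => ?_⟩
    by_contra hnr
    have hvw : v ≠ w := by rintro rfl; exact hnr (Reachable.refl _)
    have hnotmem : s(v, w) ∉ t := by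
      intro hmem
      exact hnr (SimpleGraph.Adj.reachable (by rw [fromEdgeSet_adj]; exact ⟨hmem, hvw⟩))
    have hins : insert s(v, w) t ∈ 𝒯 := by
      rw [h𝒯, Finset.mem_filter, Finset.mem_powerset]
      refine ⟨?_, htsub.trans (Finset.subset_insert _ _), ?_⟩
      · intro e he
        rcases Finset.mem_insert.mp he with rfl | he
        · simp only [Finset.mem_filter, Finset.mem_univ, true_and]
          exact fun hd => hvw (Sym2.isDiag_iff_proj_eq |>.mp hd)
        · exact htnd' he
      · have : ((insert s(v, w) t : Finset (Sym2 W)) : Set (Sym2 W))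
            = (t : Set (Sym2 W)) ∪ {s(v, w)} := by
          rw [Finset.coe_insert]; ext e; simp [or_comm]
        rw [this, fromEdgeSet_union]
        exact acyclic_insert htac hvw hnr
    exact absurd (htmax hins (Finset.subset_insert _ _)) (Finset.ssubset_insert hnotmem).not_subset
  have htree : (SimpleGraph.fromEdgeSet (t : Set (Sym2 W))).IsTree := ⟨htc, htac⟩
  have hcard' := htree.card_edgeFinset
  rw [edgeFinset_fromEdgeSet t htnd] at hcard'
  have : Γ.edgeFinset = t := Finset.eq_of_subset_of_card_le htsub (by omega)
  rw [← this, Γ.coe_edgeFinset, Γ.fromEdgeSet_edgeSet] at htc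
  exact htc

section SetLemmas

variable (A : Set W) (s : Finset (Sym2 W))

lemma induce_card (hd : ∀ e ∈ s, ¬ e.IsDiag)
    (hend : ∀ v w : W, s(v, w) ∈ s → v ∈ A ∧ w ∈ A) :
    ((SimpleGraph.fromEdgeSet (s : Set (Sym2 W))).induce A).edgeFinset.card = s.card := by
  classical
  refine Finset.card_bij (fun e _ => Sym2.map (Subtype.val) e) ?_ ?_ ?_
  · intro e he
    rw [SimpleGraph.mem_edgeFinset] at he
    induction e with
    | _ a b =>
      rw [SimpleGraph.mem_edgeSet] at he
      simp only [comap_adj, Function.Embedding.coe_subtype, fromEdgeSet_adj] at he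
      simpa using he.1
  · intro e he e' he' heq
    induction e with
    | _ a b =>
      induction e' with
      | _ a' b' =>
        simp only [Sym2.map_pair_eq, Sym2.eq_iff] at heq
        rcases heq with ⟨h1, h2⟩ | ⟨h1, h2⟩
        · rw [Subtype.ext h1, Subtype.ext h2]
        · rw [Subtype.ext h1, Subtype.ext h2, Sym2.eq_swap]
  · intro e he
    induction e with
    | _ a b =>
      obtain ⟨ha, hb⟩ := hend a b he
      refine ⟨s(⟨a, ha⟩, ⟨b, hb⟩), ?_, by simp⟩
      rw [SimpleGraph.mem_edgeFinset, SimpleGraph.mem_edgeSet]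
      simp only [comap_adj, Function.Embedding.coe_subtype, fromEdgeSet_adj]
      exact ⟨he, fun hc => hd _ he (Sym2.mk_isDiag_iff.mpr hc)⟩

end SetLemmas

lemma induce_acyclic_of (A : Set W) {Γ : SimpleGraph W} (ha : Γ.IsAcyclic) :
    (Γ.induce A).IsAcyclic := by
  intro v c hc
  exact ha (c.map (SimpleGraph.Embedding.induce A).toHom)
    (hc.map (Subtype.val_injective))

lemma induce_preconnected_of (A : Set W) (s : Finset (Sym2 W))
    (hend : ∀ v w : W, s(v, w) ∈ s → v ∈ A ∧ w ∈ A)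
    (hconn : ∀ a ∈ A, ∀ b ∈ A, (SimpleGraph.fromEdgeSet (s : Set (Sym2 W))).Reachable a b) :
    ((SimpleGraph.fromEdgeSet (s : Set (Sym2 W))).induce A).Preconnected := by
  have key : ∀ (a b : W) (p : (SimpleGraph.fromEdgeSet (s : Set (Sym2 W))).Walk a b)
      (ha' : a ∈ A) (hb' : b ∈ A),
      ((SimpleGraph.fromEdgeSet (s : Set (Sym2 W))).induce A).Reachable ⟨a, ha'⟩ ⟨b, hb'⟩ := by
    intro a b p
    induction p with
    | nil => intro ha' hb'; exact Reachable.refl _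
    | @cons a c b h q ih =>
      intro ha' hb'
      have hedge : s(a, c) ∈ s ∧ a ≠ c := by rwa [fromEdgeSet_adj] at h
      have hcA : c ∈ A := (hend a c hedge.1).2
      refine (SimpleGraph.Adj.reachable ?_).trans (ih hcA hb')
      simp only [comap_adj, Function.Embedding.coe_subtype]
      exact h
  rintro ⟨a, ha'⟩ ⟨b, hb'⟩
  obtain ⟨p⟩ := hconn a ha' b hb'
  exact key a b p ha' hb'

lemma spanning_tree_of_set_card (A : Set W) (s : Finset (Sym2 W))
    (hd : ∀ e ∈ s, ¬ e.IsDiag)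
    (hend : ∀ v w : W, s(v, w) ∈ s → v ∈ A ∧ w ∈ A)
    (ha : (SimpleGraph.fromEdgeSet (s : Set (Sym2 W))).IsAcyclic)
    (hconn : ∀ a ∈ A, ∀ b ∈ A, (SimpleGraph.fromEdgeSet (s : Set (Sym2 W))).Reachable a b)
    (hA : A.Nonempty) : s.card + 1 = A.ncard := by
  classical
  haveI : Nonempty ↥A := hA.to_subtype
  have htree : ((SimpleGraph.fromEdgeSet (s : Set (Sym2 W))).induce A).IsTree :=
    ⟨⟨induce_preconnected_of A s hend hconn⟩, induce_acyclic_of A ha⟩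
  have hcard := htree.card_edgeFinset
  rw [induce_card A s hd hend] at hcard
  rw [hcard, Set.ncard_eq_toFinset_card', Set.toFinset_card]

lemma spanning_tree_of_set_conn (A : Set W) (s : Finset (Sym2 W))
    (hd : ∀ e ∈ s, ¬ e.IsDiag)
    (hend : ∀ v w : W, s(v, w) ∈ s → v ∈ A ∧ w ∈ A)
    (ha : (SimpleGraph.fromEdgeSet (s : Set (Sym2 W))).IsAcyclic)
    (hcard : s.card + 1 = A.ncard) :
    ∀ a ∈ A, ∀ b ∈ A, (SimpleGraph.fromEdgeSet (s : Set (Sym2 W))).Reachable a b := by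
  classical
  have hconn : ((SimpleGraph.fromEdgeSet (s : Set (Sym2 W))).induce A).Connected := by
    apply connected_of_acyclic_card _ (induce_acyclic_of A ha)
    rw [induce_card A s hd hend, Set.ncard_eq_toFinset_card', Set.toFinset_card] at *
    exact hcard
  intro a ha' b hb'
  have := hconn.preconnected ⟨a, ha'⟩ ⟨b, hb'⟩
  exact this.map (SimpleGraph.Embedding.induce A).toHom

end AuxLemmas

/-- Partial factorization of the graph polynomial `Ψ_G = Ψ_γ Ψ_{G/γ} + R_{γ,G}`:
for a connected subgraph `γ` (formalized as a subgraph `H` of `G`) of a finite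
connected simple graph `G`, and any fixed spanning tree `T₀` of `γ`, the sum of the
monomials `∏_{e ∉ E(T)} X_e` of `Ψ_G` over the spanning trees `T` of `G` with
`|E(T) ∩ E(γ)| = |V(γ)| − 1` (the part of `Ψ_G` of lowest degree in the `γ`-edge
variables) equals `Ψ_γ · Σ_{F ∈ 𝒮} ∏_{e ∈ (E(G)∖E(γ))∖F} X_e`, where
`𝒮 = {F ⊆ E(G)∖E(γ) : E(T₀) ∪ F is the edge set of a spanning tree of G}`. -/
theorem symanzik_partial_factorization (V : Type) [Fintype V] [DecidableEq V]
    (G : SimpleGraph V) [Fintype G.edgeSet] (hG : G.Connected)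
    (H : G.Subgraph) (hH : H.Connected)
    (T₀ : Finset (Sym2 V)) (hT₀sub : (T₀ : Set (Sym2 V)) ⊆ H.edgeSet)
    (hT₀ac : (SimpleGraph.fromEdgeSet (T₀ : Set (Sym2 V))).IsAcyclic)
    (hT₀conn : ∀ v ∈ H.verts, ∀ w ∈ H.verts,
      (SimpleGraph.fromEdgeSet (T₀ : Set (Sym2 V))).Reachable v w) :
    let Eγ : Finset (Sym2 V) := G.edgeFinset.filter (fun e => e ∈ H.edgeSet)
    let treesG : Finset (Finset (Sym2 V)) :=
      G.edgeFinset.powerset.filter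
        (fun T => (SimpleGraph.fromEdgeSet (T : Set (Sym2 V))).IsTree)
    let treesγ : Finset (Finset (Sym2 V)) :=
      Eγ.powerset.filter
        (fun T' => (SimpleGraph.fromEdgeSet (T' : Set (Sym2 V))).IsAcyclic ∧
          ∀ v ∈ H.verts, ∀ w ∈ H.verts,
            (SimpleGraph.fromEdgeSet (T' : Set (Sym2 V))).Reachable v w)
    let 𝒮 : Finset (Finset (Sym2 V)) :=
      (G.edgeFinset \ Eγ).powerset.filter
        (fun F => (SimpleGraph.fromEdgeSet ((T₀ ∪ F : Finset (Sym2 V)) : Set (Sym2 V))).IsTree)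
    (∑ T ∈ treesG.filter (fun T => (T ∩ Eγ).card = H.verts.ncard - 1),
        ∏ e ∈ G.edgeFinset \ T, (X e : MvPolynomial (Sym2 V) ℚ))
      = (∑ T' ∈ treesγ, ∏ e ∈ Eγ \ T', (X e : MvPolynomial (Sym2 V) ℚ))
        * ∑ F ∈ 𝒮, ∏ e ∈ (G.edgeFinset \ Eγ) \ F, (X e : MvPolynomial (Sym2 V) ℚ) := by
  intro Eγ treesG treesγ 𝒮
  classical
  set A : Set V := H.verts with hA
  have hAne : A.Nonempty := hH.nonempty
  have hEγG : ∀ e ∈ Eγ, e ∈ G.edgeFinset := fun e he => (Finset.mem_filter.mp he).1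
  have hEγH : ∀ e, e ∈ Eγ ↔ e ∈ H.edgeSet := by
    intro e
    simp only [Eγ, Finset.mem_filter, SimpleGraph.mem_edgeFinset]
    exact ⟨fun h => h.2, fun h => ⟨H.edgeSet_subset h, h⟩⟩
  have hndG : ∀ e ∈ G.edgeFinset, ¬ e.IsDiag :=
    fun e he => G.not_isDiag_of_mem_edgeSet (SimpleGraph.mem_edgeFinset.mp he)
  have hendH : ∀ v w : V, s(v, w) ∈ H.edgeSet → v ∈ A ∧ w ∈ A := by
    intro v w hvw
    rw [SimpleGraph.Subgraph.mem_edgeSet] at hvw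
    exact ⟨hvw.fst_mem, hvw.snd_mem⟩
  have hT₀Eγ : ∀ e ∈ T₀, e ∈ Eγ := fun e he => (hEγH e).mpr (hT₀sub he)
  have hndT₀ : ∀ e ∈ T₀, ¬ e.IsDiag := fun e he => hndG e (hEγG e (hT₀Eγ e he))
  have hT₀card : T₀.card + 1 = A.ncard :=
    spanning_tree_of_set_card A T₀ hndT₀ (fun v w h => hendH v w (hT₀sub h)) hT₀ac hT₀conn hAne
  have hkpos : 0 < A.ncard := by omega
  -- cardinality of the vertex set
  have hnV : 0 < Fintype.card V := by
    obtain ⟨a, _⟩ := hAne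
    exact Fintype.card_pos_iff.mpr ⟨a⟩
  -- characterization of treesγ cardinality
  have hTγcard : ∀ T' ∈ treesγ, T'.card + 1 = A.ncard := by
    intro T' hT'
    rw [Finset.mem_filter, Finset.mem_powerset] at hT'
    obtain ⟨hsub, hac, hconn⟩ := hT'
    exact spanning_tree_of_set_card A T'
      (fun e he => hndG e (hEγG e (hsub he)))
      (fun v w h => hendH v w ((hEγH _).mp (hsub h))) hac hconn hAne
  -- cardinality of elements of 𝒮
  have h𝒮card : ∀ F ∈ 𝒮, Disjoint T₀ F ∧ T₀.card + F.card + 1 = Fintype.card V := by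
    intro F hF
    rw [Finset.mem_filter, Finset.mem_powerset] at hF
    obtain ⟨hsub, htree⟩ := hF
    have hdisj : Disjoint T₀ F := by
      rw [Finset.disjoint_left]
      intro e heT₀ heF
      exact (Finset.mem_sdiff.mp (hsub heF)).2 (hT₀Eγ e heT₀)
    have hnd : ∀ e ∈ T₀ ∪ F, ¬ e.IsDiag := by
      intro e he
      rcases Finset.mem_union.mp he with he | he
      · exact hndT₀ e he
      · exact hndG e (Finset.mem_sdiff.mp (hsub he)).1
    have := htree.card_edgeFinset
    rw [edgeFinset_fromEdgeSet _ hnd] at this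
    rw [Finset.card_union_of_disjoint hdisj] at this
    exact ⟨hdisj, this⟩
  -- forward direction: decompose a spanning tree of G
  have hforward : ∀ T, T ∈ treesG.filter (fun T => (T ∩ Eγ).card = H.verts.ncard - 1) →
      (T ∩ Eγ) ∈ treesγ ∧ (T \ Eγ) ∈ 𝒮 := by
    intro T hT
    rw [Finset.mem_filter] at hT
    obtain ⟨hT1, hTcard⟩ := hT
    rw [← hA] at hTcard
    rw [Finset.mem_filter, Finset.mem_powerset] at hT1
    obtain ⟨hTsub, hTtree⟩ := hT1
    have hndT : ∀ e ∈ T, ¬ e.IsDiag := fun e he => hndG e (hTsub he)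
    have hTcard' : T.card + 1 = Fintype.card V := by
      have := hTtree.card_edgeFinset
      rwa [edgeFinset_fromEdgeSet _ hndT] at this
    have hT'ac : (SimpleGraph.fromEdgeSet ((T ∩ Eγ : Finset (Sym2 V)) : Set (Sym2 V))).IsAcyclic :=
      acyclic_anti (SimpleGraph.fromEdgeSet_mono (by
        exact_mod_cast Finset.coe_subset.mpr Finset.inter_subset_left)) hTtree.IsAcyclic
    have hT'card : (T ∩ Eγ).card + 1 = A.ncard := by omega
    have hT'conn : ∀ a ∈ A, ∀ b ∈ A,
        (SimpleGraph.fromEdgeSet ((T ∩ Eγ : Finset (Sym2 V)) : Set (Sym2 V))).Reachable a b :=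
      spanning_tree_of_set_conn A (T ∩ Eγ)
        (fun e he => hndG e (hEγG e (Finset.mem_of_mem_inter_right he)))
        (fun v w h => hendH v w ((hEγH _).mp (Finset.mem_of_mem_inter_right h)))
        hT'ac hT'card
    have hdisj : Disjoint T₀ (T \ Eγ) := by
      rw [Finset.disjoint_left]
      intro e he1 he2
      exact (Finset.mem_sdiff.mp he2).2 (hT₀Eγ e he1)
    have hndTF : ∀ e ∈ T₀ ∪ (T \ Eγ), ¬ e.IsDiag := by
      intro e he
      rcases Finset.mem_union.mp he with he | he
      · exact hndT₀ e he
      · exact hndT e (Finset.mem_sdiff.mp he).1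
    have hcardTF : (T₀ ∪ (T \ Eγ)).card + 1 = Fintype.card V := by
      rw [Finset.card_union_of_disjoint hdisj]
      have h1 := Finset.card_sdiff_add_card_inter T Eγ
      omega
    have hconnTF :
        (SimpleGraph.fromEdgeSet ((T₀ ∪ (T \ Eγ) : Finset (Sym2 V)) : Set (Sym2 V))).Connected := by
      haveI : Nonempty V := Fintype.card_pos_iff.mp hnV
      refine ⟨fun v w => ?_⟩
      refine reachable_of_adj_reachable (fun x y hadj => ?_)
        (hTtree.isConnected.preconnected v w)
      rw [SimpleGraph.fromEdgeSet_adj] at hadj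
      obtain ⟨hmemT, hxy⟩ := hadj
      rw [Finset.mem_coe] at hmemT
      by_cases hmem : s(x, y) ∈ Eγ
      · obtain ⟨hxA, hyA⟩ := hendH x y ((hEγH _).mp hmem)
        refine (hT₀conn x hxA y hyA).mono (SimpleGraph.fromEdgeSet_mono ?_)
        exact_mod_cast Finset.coe_subset.mpr Finset.subset_union_left
      · refine SimpleGraph.Adj.reachable ?_
        rw [SimpleGraph.fromEdgeSet_adj]
        refine ⟨?_, hxy⟩
        rw [Finset.mem_coe, Finset.mem_union, Finset.mem_sdiff]
        exact Or.inr ⟨hmemT, hmem⟩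
    have hacTF := isAcyclic_of_connected_card _ hconnTF
      (by rw [edgeFinset_fromEdgeSet _ hndTF]; exact hcardTF)
    constructor
    · rw [Finset.mem_filter, Finset.mem_powerset]
      exact ⟨Finset.inter_subset_right, hT'ac, hT'conn⟩
    · rw [Finset.mem_filter, Finset.mem_powerset]
      exact ⟨Finset.sdiff_subset_sdiff hTsub (Finset.Subset.refl _), hconnTF, hacTF⟩
  -- backward direction
  have hbackward : ∀ T' ∈ treesγ, ∀ F ∈ 𝒮,
      T' ∪ F ∈ treesG.filter (fun T => (T ∩ Eγ).card = H.verts.ncard - 1) := by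
    intro T' hT' F hF
    have hT'card := hTγcard T' hT'
    rw [Finset.mem_filter, Finset.mem_powerset] at hT'
    obtain ⟨hT'sub, hT'ac, hT'conn⟩ := hT'
    obtain ⟨hdisj₀F, hFcard⟩ := h𝒮card F hF
    rw [Finset.mem_filter, Finset.mem_powerset] at hF
    obtain ⟨hFsub, hFtree⟩ := hF
    have hFnotEγ : ∀ e ∈ F, e ∉ Eγ := fun e he => (Finset.mem_sdiff.mp (hFsub he)).2
    have hdisj : Disjoint T' F := by
      rw [Finset.disjoint_left]
      exact fun e he1 he2 => hFnotEγ e he2 (hT'sub he1)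
    have hndTF : ∀ e ∈ T' ∪ F, ¬ e.IsDiag := by
      intro e he
      rcases Finset.mem_union.mp he with he | he
      · exact hndG e (hEγG e (hT'sub he))
      · exact hndG e (Finset.mem_sdiff.mp (hFsub he)).1
    have hcardTF : (T' ∪ F).card + 1 = Fintype.card V := by
      rw [Finset.card_union_of_disjoint hdisj]
      omega
    have hconnTF :
        (SimpleGraph.fromEdgeSet ((T' ∪ F : Finset (Sym2 V)) : Set (Sym2 V))).Connected := by
      haveI : Nonempty V := Fintype.card_pos_iff.mp hnV
      refine ⟨fun v w => ?_⟩
      refine reachable_of_adj_reachable (fun x y hadj => ?_)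
        (hFtree.isConnected.preconnected v w)
      rw [SimpleGraph.fromEdgeSet_adj] at hadj
      obtain ⟨hmemT, hxy⟩ := hadj
      rw [Finset.mem_coe, Finset.mem_union] at hmemT
      rcases hmemT with hmem | hmem
      · obtain ⟨hxA, hyA⟩ := hendH x y (hT₀sub hmem)
        refine (hT'conn x hxA y hyA).mono (SimpleGraph.fromEdgeSet_mono ?_)
        exact_mod_cast Finset.coe_subset.mpr Finset.subset_union_left
      · refine SimpleGraph.Adj.reachable ?_
        rw [SimpleGraph.fromEdgeSet_adj]
        exact ⟨by rw [Finset.mem_coe, Finset.mem_union]; exact Or.inr hmem, hxy⟩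
    have hacTF := isAcyclic_of_connected_card _ hconnTF
      (by rw [edgeFinset_fromEdgeSet _ hndTF]; exact hcardTF)
    have hinter : (T' ∪ F) ∩ Eγ = T' := by
      ext e
      rw [Finset.mem_inter, Finset.mem_union]
      constructor
      · rintro ⟨hm | hm, hEγm⟩
        · exact hm
        · exact absurd hEγm (hFnotEγ e hm)
      · intro hm
        exact ⟨Or.inl hm, hT'sub hm⟩
    rw [Finset.mem_filter, Finset.mem_filter, Finset.mem_powerset]
    refine ⟨⟨?_, hconnTF, hacTF⟩, ?_⟩
    · intro e he
      rcases Finset.mem_union.mp he with he | he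
      · exact hEγG e (hT'sub he)
      · exact (Finset.mem_sdiff.mp (hFsub he)).1
    · rw [hinter, ← hA]
      omega
  rw [Finset.sum_mul_sum, ← Finset.sum_product']
  refine Finset.sum_nbij' (fun T => (T ∩ Eγ, T \ Eγ)) (fun p => p.1 ∪ p.2) ?_ ?_ ?_ ?_ ?_
  · intro T hT
    rw [Finset.mem_product]
    exact hforward T hT
  · intro p hp
    rw [Finset.mem_product] at hp
    exact hbackward p.1 hp.1 p.2 hp.2
  · intro T hT
    ext e
    simp only [Finset.mem_union, Finset.mem_inter, Finset.mem_sdiff]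
    tauto
  · intro p hp
    rw [Finset.mem_product] at hp
    obtain ⟨hp1, hp2⟩ := hp
    have hT'sub : p.1 ⊆ Eγ := Finset.mem_powerset.mp (Finset.mem_filter.mp hp1).1
    have hFsub : p.2 ⊆ G.edgeFinset \ Eγ := Finset.mem_powerset.mp (Finset.mem_filter.mp hp2).1
    have hFnotEγ : ∀ e ∈ p.2, e ∉ Eγ := fun e he => (Finset.mem_sdiff.mp (hFsub he)).2
    have h1 : (p.1 ∪ p.2) ∩ Eγ = p.1 := by
      ext e
      rw [Finset.mem_inter, Finset.mem_union]
      constructor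
      · rintro ⟨hm | hm, hEγm⟩
        · exact hm
        · exact absurd hEγm (hFnotEγ e hm)
      · intro hm
        exact ⟨Or.inl hm, hT'sub hm⟩
    have h2 : (p.1 ∪ p.2) \ Eγ = p.2 := by
      ext e
      rw [Finset.mem_sdiff, Finset.mem_union]
      constructor
      · rintro ⟨hm | hm, hEγm⟩
        · exact absurd (hT'sub hm) hEγm
        · exact hm
      · intro hm
        exact ⟨Or.inr hm, hFnotEγ e hm⟩
    exact Prod.ext h1 h2
  · intro T hT
    have hTsub : T ⊆ G.edgeFinset :=
      Finset.mem_powerset.mp (Finset.mem_filter.mp (Finset.mem_filter.mp hT).1).1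
    have hsplit : G.edgeFinset \ T = (Eγ \ (T ∩ Eγ)) ∪ ((G.edgeFinset \ Eγ) \ (T \ Eγ)) := by
      ext e
      have h1 : e ∈ Eγ → e ∈ G.edgeFinset := hEγG e
      have h2 : e ∈ T → e ∈ G.edgeFinset := fun h => hTsub h
      simp only [Finset.mem_sdiff, Finset.mem_union, Finset.mem_inter]
      tauto
    have hdisj : Disjoint (Eγ \ (T ∩ Eγ)) ((G.edgeFinset \ Eγ) \ (T \ Eγ)) := by
      rw [Finset.disjoint_left]
      intro e he1 he2
      exact (Finset.mem_sdiff.mp (Finset.mem_sdiff.mp he2).1).2 (Finset.mem_sdiff.mp he1).1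
    rw [hsplit, Finset.prod_union hdisj]
end

section
/- The set of all finite ℚ-linear combinations of 1 and of multiple zeta values ζ(n_1, …, n_r) (over all r ≥ 1 and integers n_1, …, n_r ≥ 1 with n_r ≥ 2) is a ℚ-subalgebra of ℝ; in particular, the product of any two multiple zeta values is a ℚ-linear combination of multiple zeta values. -/
open Finset Filter

/-- Truncated multiple zeta sum: word lists exponents with the *largest* index first. -/
noncomputable def ZP : List ℕ → ℕ → ℝ
  | [], _ => 1
  | a :: w, N => ∑ K ∈ Finset.Ico 1 N, ((K : ℝ) ^ a)⁻¹ * ZP w K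

@[simp] lemma ZP_nil (N : ℕ) : ZP [] N = 1 := rfl

lemma ZP_cons (a : ℕ) (w : List ℕ) (N : ℕ) :
    ZP (a :: w) N = ∑ K ∈ Finset.Ico 1 N, ((K : ℝ) ^ a)⁻¹ * ZP w K := rfl

/-- Stuffle (quasi-shuffle) product of words. -/
def st : List ℕ → List ℕ → List (List ℕ)
  | [], v => [v]
  | a :: u, [] => [a :: u]
  | a :: u, b :: v =>
      ((st u (b :: v)).map (a :: ·)) ++ ((st (a :: u) v).map (b :: ·)) ++
        ((st u v).map ((a + b) :: ·))
  termination_by u v => u.length + v.length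

@[simp] lemma st_nil (v : List ℕ) : st [] v = [v] := by rw [st]
@[simp] lemma st_cons_nil (a : ℕ) (u : List ℕ) : st (a :: u) [] = [a :: u] := by rw [st]
lemma st_cons_cons (a b : ℕ) (u v : List ℕ) :
    st (a :: u) (b :: v) =
      ((st u (b :: v)).map (a :: ·)) ++ ((st (a :: u) v).map (b :: ·)) ++
        ((st u v).map ((a + b) :: ·)) := by rw [st]

lemma double_split (N : ℕ) (f : ℕ → ℕ → ℝ) :
    ∑ K ∈ Finset.Ico 1 N, ∑ L ∈ Finset.Ico 1 N, f K L =
      (∑ L ∈ Finset.Ico 1 N, ∑ K ∈ Finset.Ico 1 L, f K L) +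
      (∑ K ∈ Finset.Ico 1 N, ∑ L ∈ Finset.Ico 1 K, f K L) +
      ∑ K ∈ Finset.Ico 1 N, f K K := by
  induction N with
  | zero => simp
  | succ N ih =>
    rcases Nat.eq_zero_or_pos N with h | h
    · subst h; simp
    simp only [Finset.sum_Ico_succ_top h]
    rw [Finset.sum_add_distrib, ih]
    ring

lemma list_sum_swap (ws : List (List ℕ)) (s : Finset ℕ) (f : List ℕ → ℕ → ℝ) :
    ∑ b ∈ s, (ws.map (fun w => f w b)).sum = (ws.map (fun w => ∑ b ∈ s, f w b)).sum := by
  induction ws with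
  | nil => simp
  | cons w ws ih => simp [Finset.sum_add_distrib, ih]

lemma ZP_mul_aux : ∀ (c : ℕ) (u v : List ℕ), u.length + v.length ≤ c → ∀ N,
    ZP u N * ZP v N = ((st u v).map (fun w => ZP w N)).sum := by
  intro c
  induction c with
  | zero =>
    intro u v h N
    obtain rfl : u = [] := by apply List.eq_nil_of_length_eq_zero; omega
    simp
  | succ c ih =>
    intro u v h N
    match u, v with
    | [], v => simp
    | a :: u, [] => simp
    | a :: u, b :: v =>
      have hlu : u.length + (b :: v).length ≤ c := by simp at h ⊢; omega
      have hlv : (a :: u).length + v.length ≤ c := by simp at h ⊢; omega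
      have hluv : u.length + v.length ≤ c := by simp at h ⊢; omega
      rw [ZP_cons a u N, ZP_cons b v N, Finset.sum_mul_sum]
      rw [double_split N (fun (K L : ℕ) => ((K:ℝ)^a)⁻¹ * ZP u K * (((L:ℝ)^b)⁻¹ * ZP v L))]
      have keyL : (∑ L ∈ Finset.Ico 1 N, ∑ K ∈ Finset.Ico 1 L,
            ((K:ℝ)^a)⁻¹ * ZP u K * (((L:ℝ)^b)⁻¹ * ZP v L)) =
          ((st (a :: u) v).map (fun w => ZP (b :: w) N)).sum := by
        have e1 : ∀ L : ℕ, (∑ K ∈ Finset.Ico 1 L, ((K:ℝ)^a)⁻¹ * ZP u K * (((L:ℝ)^b)⁻¹ * ZP v L)) =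
            ((st (a :: u) v).map (fun w => ((L:ℝ)^b)⁻¹ * ZP w L)).sum := by
          intro L
          rw [← Finset.sum_mul, ← ZP_cons a u L,
            show ZP (a :: u) L * (((L:ℝ)^b)⁻¹ * ZP v L) =
              ((L:ℝ)^b)⁻¹ * (ZP (a :: u) L * ZP v L) by ring,
            ih _ _ hlv L, ← List.sum_map_mul_left]
        rw [funext fun L => e1 L] at *
        rw [list_sum_swap]
        congr 1
      have keyR : (∑ K ∈ Finset.Ico 1 N, ∑ L ∈ Finset.Ico 1 K,
            ((K:ℝ)^a)⁻¹ * ZP u K * (((L:ℝ)^b)⁻¹ * ZP v L)) =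
          ((st u (b :: v)).map (fun w => ZP (a :: w) N)).sum := by
        have e1 : ∀ K : ℕ, (∑ L ∈ Finset.Ico 1 K, ((K:ℝ)^a)⁻¹ * ZP u K * (((L:ℝ)^b)⁻¹ * ZP v L)) =
            ((st u (b :: v)).map (fun w => ((K:ℝ)^a)⁻¹ * ZP w K)).sum := by
          intro K
          rw [← Finset.mul_sum, ← ZP_cons b v K,
            show ((K:ℝ)^a)⁻¹ * ZP u K * ZP (b :: v) K =
              ((K:ℝ)^a)⁻¹ * (ZP u K * ZP (b :: v) K) by ring,
            ih _ _ hlu K, ← List.sum_map_mul_left]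
        rw [funext fun K => e1 K] at *
        rw [list_sum_swap]
        congr 1
      have keyD : (∑ K ∈ Finset.Ico 1 N,
            ((K:ℝ)^a)⁻¹ * ZP u K * (((K:ℝ)^b)⁻¹ * ZP v K)) =
          ((st u v).map (fun w => ZP ((a + b) :: w) N)).sum := by
        have e1 : ∀ K : ℕ, ((K:ℝ)^a)⁻¹ * ZP u K * (((K:ℝ)^b)⁻¹ * ZP v K) =
            ((st u v).map (fun w => ((K:ℝ)^(a+b))⁻¹ * ZP w K)).sum := by
          intro K
          have : ((K:ℝ)^a)⁻¹ * ZP u K * (((K:ℝ)^b)⁻¹ * ZP v K) =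
              ((K:ℝ)^(a+b))⁻¹ * (ZP u K * ZP v K) := by
            rw [pow_add, mul_inv]; ring
          rw [this, ih _ _ hluv K, ← List.sum_map_mul_left]
        rw [funext fun K => e1 K]
        rw [list_sum_swap]
        congr 1
      rw [keyL, keyR, keyD, st_cons_cons, List.map_append, List.map_append,
        List.sum_append, List.sum_append, List.map_map, List.map_map, List.map_map]
      have : ∀ (x : ℕ) (l : List (List ℕ)),
          (l.map ((fun w => ZP w N) ∘ (x :: ·))).sum = (l.map (fun w => ZP (x :: w) N)).sum := by
        intro x l; rfl
      rw [this, this, this]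
      ring

lemma ZP_mul (u v : List ℕ) (N : ℕ) :
    ZP u N * ZP v N = ((st u v).map (fun w => ZP w N)).sum :=
  ZP_mul_aux (u.length + v.length) u v le_rfl N


lemma summable_pi_prod (r : ℕ) (h : ℕ+ → ℝ) (hs : Summable h) (h0 : ∀ m, 0 ≤ h m) :
    Summable (fun d : Fin r → ℕ+ => ∏ i, h (d i)) := by
  induction r with
  | zero => exact summable_of_finite_support (Set.toFinite _)
  | succ r ih =>
    have hsum := (hs.mul_of_nonneg ih (fun m => h0 m) (fun d => Finset.prod_nonneg fun i _ => h0 _))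
    rw [← (Fin.consEquiv (fun _ : Fin (r+1) => ℕ+)).summable_iff]
    apply hsum.congr
    intro ⟨x, d⟩
    simp [Fin.consEquiv, Fin.prod_univ_succ, Function.comp]

lemma mzv_summable (r : ℕ) (hr : 0 < r) (n : Fin r → ℕ) (h1 : ∀ i, 1 ≤ n i)
    (h2 : 2 ≤ n ⟨r - 1, Nat.sub_lt hr Nat.one_pos⟩) :
    Summable (fun k : {k : Fin r → ℕ+ // StrictMono k} => ∏ i, (1 : ℝ) / (k.1 i : ℝ) ^ n i) := by
  set p : ℝ := 1 + 1 / r with hp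
  have hp1 : 1 < p := by
    rw [hp]
    have : (0:ℝ) < 1 / r := by positivity
    linarith
  have hsh : Summable (fun m : ℕ+ => (((m : ℕ) : ℝ) ^ p)⁻¹) := by
    exact ((Real.summable_nat_rpow_inv).2 hp1).comp_injective PNat.coe_injective
  have h0 : ∀ m : ℕ+, (0:ℝ) ≤ (((m : ℕ) : ℝ) ^ p)⁻¹ := by
    intro m; positivity
  have hG := summable_pi_prod r _ hsh h0
  -- the difference map
  set last : Fin r := ⟨r - 1, Nat.sub_lt hr Nat.one_pos⟩ with hlast
  have hle_last : ∀ (k : {k : Fin r → ℕ+ // StrictMono k}) (i : Fin r), k.1 i ≤ k.1 last := by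
    intro k i
    apply k.2.monotone
    have : (i : ℕ) ≤ r - 1 := by omega
    exact this
  set prev : {k : Fin r → ℕ+ // StrictMono k} → Fin r → ℕ :=
    fun k i => if h : (i : ℕ) = 0 then 0 else (k.1 ⟨(i : ℕ) - 1, by omega⟩ : ℕ) with hprev
  have hprev_lt : ∀ k i, prev k i < (k.1 i : ℕ) := by
    intro k i
    rw [hprev]
    dsimp only
    split
    · exact (k.1 i).pos
    · exact_mod_cast k.2 (show (⟨(i:ℕ)-1, by omega⟩ : Fin r) < i by
        rw [Fin.lt_def]; simp; omega)
  set T : {k : Fin r → ℕ+ // StrictMono k} → (Fin r → ℕ+) :=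
    fun k i => ⟨(k.1 i : ℕ) - prev k i, by have := hprev_lt k i; omega⟩ with hT
  have hTinj : Function.Injective T := by
    intro k k' he
    have key : ∀ m : ℕ, ∀ hm : m < r, k.1 ⟨m, hm⟩ = k'.1 ⟨m, hm⟩ := by
      intro m
      induction m with
      | zero =>
        intro hm
        have hnat : ((k.1 ⟨0, hm⟩ : ℕ) - prev k ⟨0, hm⟩) =
            ((k'.1 ⟨0, hm⟩ : ℕ) - prev k' ⟨0, hm⟩) :=
          congrArg PNat.val (congrFun he ⟨0, hm⟩)
        have h0' : prev k ⟨0, hm⟩ = 0 := by rw [hprev]; simp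
        have h0'' : prev k' ⟨0, hm⟩ = 0 := by rw [hprev]; simp
        have hl1 := hprev_lt k ⟨0, hm⟩
        have hl2 := hprev_lt k' ⟨0, hm⟩
        apply PNat.coe_injective
        omega
      | succ m ihm =>
        intro hm
        have hnat : ((k.1 ⟨m + 1, hm⟩ : ℕ) - prev k ⟨m + 1, hm⟩) =
            ((k'.1 ⟨m + 1, hm⟩ : ℕ) - prev k' ⟨m + 1, hm⟩) :=
          congrArg PNat.val (congrFun he ⟨m + 1, hm⟩)
        have hm' : m < r := by omega
        have hpk : prev k ⟨m + 1, hm⟩ = (k.1 ⟨m, hm'⟩ : ℕ) := by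
          rw [hprev]; simp
        have hpk' : prev k' ⟨m + 1, hm⟩ = (k'.1 ⟨m, hm'⟩ : ℕ) := by
          rw [hprev]; simp
        have h1' := hprev_lt k ⟨m + 1, hm⟩
        have h2' := hprev_lt k' ⟨m + 1, hm⟩
        have hc : (k.1 ⟨m, hm'⟩ : ℕ) = (k'.1 ⟨m, hm'⟩ : ℕ) := by rw [ihm hm']
        apply PNat.coe_injective
        omega
    apply Subtype.ext
    funext i
    exact key i.1 i.2
  -- termwise bound
  have hbound : ∀ k : {k : Fin r → ℕ+ // StrictMono k},
      (∏ i, (1 : ℝ) / (k.1 i : ℝ) ^ n i) ≤ (fun d : Fin r → ℕ+ => ∏ i, (((d i : ℕ) : ℝ) ^ p)⁻¹) (T k) := by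
    intro k
    have hdle : ∀ i, ((T k i : ℕ) : ℝ) ≤ ((k.1 i : ℕ) : ℝ) := by
      intro i
      have : (T k i : ℕ) ≤ (k.1 i : ℕ) := by rw [hT]; simp
      exact_mod_cast this
    have hdpos : ∀ i, (0:ℝ) < ((T k i : ℕ) : ℝ) := by
      intro i; exact_mod_cast (T k i).pos
    have hkpos : ∀ i, (0:ℝ) < ((k.1 i : ℕ) : ℝ) := by
      intro i; exact_mod_cast (k.1 i).pos
    have hk1 : ∀ i, (1:ℝ) ≤ ((k.1 i : ℕ) : ℝ) := by
      intro i; exact_mod_cast (k.1 i).one_le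
    -- main inequality on products
    have main : ∏ i, (((T k i : ℕ) : ℝ)) ^ p ≤ ∏ i, ((k.1 i : ℕ) : ℝ) ^ n i := by
      rw [Real.finset_prod_rpow _ _ (fun i _ => (hdpos i).le)]
      have hA : (∏ i, ((T k i : ℕ) : ℝ)) ^ p =
          (∏ i, ((T k i : ℕ) : ℝ)) * (∏ i, ((T k i : ℕ) : ℝ)) ^ ((1:ℝ)/r) := by
        rw [hp, Real.rpow_add (Finset.prod_pos fun i _ => hdpos i), Real.rpow_one]
      rw [hA]
      have hprod_le : (∏ i, ((T k i : ℕ) : ℝ)) ≤ ∏ i, ((k.1 i : ℕ) : ℝ) :=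
        Finset.prod_le_prod (fun i _ => (hdpos i).le) (fun i _ => hdle i)
      have hrt : (∏ i, ((T k i : ℕ) : ℝ)) ^ ((1:ℝ)/r) ≤ ((k.1 last : ℕ) : ℝ) := by
        have hdlast : ∀ i, ((T k i : ℕ) : ℝ) ≤ ((k.1 last : ℕ) : ℝ) := by
          intro i
          refine (hdle i).trans ?_
          exact_mod_cast hle_last k i
        have h1' : (∏ i, ((T k i : ℕ) : ℝ)) ≤ ((k.1 last : ℕ) : ℝ) ^ r := by
          calc (∏ i, ((T k i : ℕ) : ℝ)) ≤ ∏ _i : Fin r, ((k.1 last : ℕ) : ℝ) :=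
                Finset.prod_le_prod (fun i _ => (hdpos i).le) (fun i _ => hdlast i)
            _ = ((k.1 last : ℕ) : ℝ) ^ r := by rw [Finset.prod_const, Finset.card_univ, Fintype.card_fin]
        calc (∏ i, ((T k i : ℕ) : ℝ)) ^ ((1:ℝ)/r)
            ≤ (((k.1 last : ℕ) : ℝ) ^ r) ^ ((1:ℝ)/r) := by
              apply Real.rpow_le_rpow (Finset.prod_nonneg fun i _ => (hdpos i).le) h1'
              positivity
          _ = ((k.1 last : ℕ) : ℝ) := by
              rw [← Real.rpow_natCast _ r, ← Real.rpow_mul (hkpos last).le,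
                mul_one_div_cancel (by exact_mod_cast hr.ne'), Real.rpow_one]
      have hfinal : (∏ i, ((k.1 i : ℕ) : ℝ)) * ((k.1 last : ℕ) : ℝ) ≤
          ∏ i, ((k.1 i : ℕ) : ℝ) ^ n i := by
        have hsplit : ∏ i, ((k.1 i : ℕ) : ℝ) ^ n i =
            (∏ i, ((k.1 i : ℕ) : ℝ)) * ∏ i, ((k.1 i : ℕ) : ℝ) ^ (n i - 1) := by
          rw [← Finset.prod_mul_distrib]
          apply Finset.prod_congr rfl
          intro i _
          rw [← pow_succ']
          congr 1
          have := h1 i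
          omega
        rw [hsplit]
        apply mul_le_mul_of_nonneg_left _ (Finset.prod_nonneg fun i _ => (hkpos i).le)
        calc ((k.1 last : ℕ) : ℝ) ≤ ((k.1 last : ℕ) : ℝ) ^ (n last - 1) := by
              apply le_self_pow₀ (hk1 last)
              have := h2
              omega
          _ ≤ ∏ i, ((k.1 i : ℕ) : ℝ) ^ (n i - 1) := by
              rw [← Finset.mul_prod_erase Finset.univ _ (Finset.mem_univ last)]
              apply le_mul_of_one_le_right (by positivity)
              calc (1:ℝ) = ∏ _i ∈ Finset.univ.erase last, (1:ℝ) := by simp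
                _ ≤ ∏ i ∈ Finset.univ.erase last, ((k.1 i : ℕ) : ℝ) ^ (n i - 1) :=
                  Finset.prod_le_prod (by intros; norm_num)
                    (fun i _ => one_le_pow₀ (hk1 i))
      calc (∏ i, ((T k i : ℕ) : ℝ)) * (∏ i, ((T k i : ℕ) : ℝ)) ^ ((1:ℝ)/r)
          ≤ (∏ i, ((k.1 i : ℕ) : ℝ)) * ((k.1 last : ℕ) : ℝ) := by
            apply mul_le_mul hprod_le hrt (by positivity)
              (Finset.prod_nonneg fun i _ => (hkpos i).le)
        _ ≤ ∏ i, ((k.1 i : ℕ) : ℝ) ^ n i := hfinal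
    -- conclude
    simp only
    rw [Finset.prod_inv_distrib]
    have e1 : ∏ i, (1 : ℝ) / (k.1 i : ℝ) ^ n i = (∏ i, ((k.1 i : ℕ) : ℝ) ^ n i)⁻¹ := by
      rw [← Finset.prod_inv_distrib]
      exact Finset.prod_congr rfl fun i _ => one_div _
    rw [e1]
    apply inv_anti₀
    · exact Finset.prod_pos fun i _ => Real.rpow_pos_of_pos (hdpos i) p
    · exact main
  apply Summable.of_nonneg_of_le _ hbound (hG.comp_injective hTinj)
  intro k
  apply Finset.prod_nonneg
  intro i _
  positivity



/-- exponent function attached to a word (largest index first). -/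
def nOf (w : List ℕ) : Fin w.length → ℕ :=
  fun i => w[w.length - 1 - (i : ℕ)]'(by omega)

lemma getElem_idx_congr (l : List ℕ) (i j : ℕ) (h : i < l.length) (e : i = j) :
    l[i]'h = l[j]'(e ▸ h) := by subst e; rfl

lemma nOf_last (a : ℕ) (w : List ℕ) : nOf (a :: w) (Fin.last w.length) = a := by
  unfold nOf
  rw [getElem_idx_congr _ _ 0 _ (by simp)]
  exact List.getElem_cons_zero _ _ _

lemma nOf_castSucc (a : ℕ) (w : List ℕ) (i : Fin w.length) :
    nOf (a :: w) (Fin.castSucc i) = nOf w i := by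
  unfold nOf
  rw [getElem_idx_congr _ _ ((w.length - 1 - (i : ℕ)) + 1) _
    (by have := i.2; simp; omega)]
  exact List.getElem_cons_succ _ _ _ _

/-- The value of the multiple zeta series attached to a word. -/
noncomputable def MZ (w : List ℕ) : ℝ :=
  ∑' k : {k : Fin w.length → ℕ+ // StrictMono k}, ∏ i, (1 : ℝ) / (k.1 i : ℝ) ^ nOf w i

lemma strictMono_snoc {r : ℕ} (p : Fin r → ℕ+) (hp : StrictMono p) (x : ℕ+)
    (hx : ∀ i, p i < x) : StrictMono (Fin.snoc p x) := by
  intro i j hij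
  induction j using Fin.lastCases with
  | last =>
    obtain ⟨i', rfl⟩ := Fin.exists_castSucc_eq.2 (ne_of_lt hij)
    rw [Fin.snoc_castSucc, Fin.snoc_last]
    exact hx i'
  | cast j' =>
    have hi : i ≠ Fin.last r := by
      intro h
      subst h
      have := lt_trans hij (Fin.castSucc_lt_last j')
      exact lt_irrefl _ this
    obtain ⟨i', rfl⟩ := Fin.exists_castSucc_eq.2 hi
    rw [Fin.snoc_castSucc, Fin.snoc_castSucc]
    exact hp (Fin.castSucc_lt_castSucc_iff.1 hij)

lemma finite_small (r N : ℕ) :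
    {k : {k : Fin r → ℕ+ // StrictMono k} | ∀ i, (k.1 i : ℕ) < N}.Finite := by
  apply Set.Finite.of_finite_image (f := fun k => (fun i => (k.1 i : ℕ) : Fin r → ℕ))
  · apply Set.Finite.subset (Set.Finite.pi (t := fun _ : Fin r => Set.Iio N)
      (fun _ => Set.finite_Iio N))
    rintro g ⟨k, hk, rfl⟩
    intro i _
    exact hk i
  · intro k _ k' _ he
    apply Subtype.ext
    funext i
    exact PNat.coe_injective (congrFun he i)

/-- Finset of strictly monotone tuples with all entries `< N`. -/
noncomputable def DD (w : List ℕ) (N : ℕ) : Finset {k : Fin w.length → ℕ+ // StrictMono k} :=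
  (finite_small w.length N).toFinset

lemma mem_DD {w : List ℕ} {N : ℕ} {k : {k : Fin w.length → ℕ+ // StrictMono k}} :
    k ∈ DD w N ↔ ∀ i, (k.1 i : ℕ) < N := Set.Finite.mem_toFinset _

lemma ZP_eq_sum : ∀ (w : List ℕ) (N : ℕ),
    ZP w N = ∑ k ∈ DD w N, ∏ i, (1 : ℝ) / (k.1 i : ℝ) ^ nOf w i := by
  intro w
  induction w with
  | nil =>
    intro N
    have hD : DD ([] : List ℕ) N = {⟨fun i => i.elim0, fun i => i.elim0⟩} := by
      ext k
      simp only [mem_DD, Finset.mem_singleton]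
      constructor
      · intro _
        apply Subtype.ext
        funext i
        exact i.elim0
      · intro _ i
        exact i.elim0
    rw [hD, Finset.sum_singleton]
    simp [ZP]
  | cons a w ih =>
    intro N
    rw [ZP_cons]
    have e1 : ∀ K ∈ Finset.Ico 1 N, ((K : ℝ) ^ a)⁻¹ * ZP w K =
        ∑ k ∈ DD w K, ((K : ℝ) ^ a)⁻¹ * ∏ i, (1 : ℝ) / (k.1 i : ℝ) ^ nOf w i := by
      intro K _
      rw [ih K, Finset.mul_sum]
    rw [Finset.sum_congr rfl e1, Finset.sum_sigma' (Finset.Ico 1 N) (fun K => DD w K)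
      (fun K k => ((K : ℝ) ^ a)⁻¹ * ∏ i, (1 : ℝ) / (k.1 i : ℝ) ^ nOf w i)]
    symm
    refine Finset.sum_bij'
      (fun (k : {k : Fin (a :: w).length → ℕ+ // StrictMono k}) (_ : k ∈ DD (a :: w) N) =>
        (⟨(k.1 (Fin.last w.length) : ℕ),
          ⟨Fin.init k.1, fun i j hij => k.2 (Fin.castSucc_lt_castSucc_iff.2 hij)⟩⟩ :
          (K : ℕ) × {k : Fin w.length → ℕ+ // StrictMono k}))
      (fun x hx =>
        ⟨Fin.snoc x.2.1 ⟨x.1, by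
            have h1 := (Finset.mem_sigma.1 hx).1
            rw [Finset.mem_Ico] at h1
            omega⟩,
          strictMono_snoc x.2.1 x.2.2 _ (by
            intro i
            have h2 := (Finset.mem_sigma.1 hx).2
            exact_mod_cast (mem_DD.1 h2) i)⟩)
      ?_ ?_ ?_ ?_ ?_
    · -- hi : forward membership
      intro k hk
      have hk' := mem_DD.1 hk
      rw [Finset.mem_sigma]
      refine ⟨Finset.mem_Ico.2 ⟨(k.1 (Fin.last w.length)).one_le, hk' _⟩, mem_DD.2 ?_⟩
      intro i
      have : k.1 (Fin.castSucc i) < k.1 (Fin.last w.length) :=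
        k.2 (Fin.castSucc_lt_last i)
      exact_mod_cast this
    · -- hj : backward membership
      intro x hx
      have h1 := (Finset.mem_sigma.1 hx).1
      have h2 := (Finset.mem_sigma.1 hx).2
      rw [Finset.mem_Ico] at h1
      refine mem_DD.2 ?_
      intro i
      dsimp only
      induction i using Fin.lastCases with
      | last => exact lt_of_eq_of_lt (congrArg PNat.val (Fin.snoc_last _ _)) h1.2
      | cast i' =>
        exact lt_of_eq_of_lt (congrArg PNat.val (Fin.snoc_castSucc _ _ _))
          (lt_trans (by exact_mod_cast (mem_DD.1 h2) i') h1.2)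
    · -- left inverse : j (i k) = k
      intro k hk
      apply Subtype.ext
      exact Fin.snoc_init_self k.1
    · -- right inverse : i (j x) = x
      intro x hx
      refine Sigma.ext ?_ ?_
      · exact congrArg PNat.val (Fin.snoc_last (α := fun _ => ℕ+) _ _)
      · apply heq_of_eq
        apply Subtype.ext
        dsimp only
        exact Fin.init_snoc _ _
    · -- values
      intro k hk
      show (∏ i : Fin (w.length + 1), (1 : ℝ) / (k.1 i : ℝ) ^ nOf (a :: w) i) =
        (((k.1 (Fin.last w.length) : ℕ) : ℝ) ^ a)⁻¹ *
          ∏ i : Fin w.length, (1 : ℝ) / ((Fin.init k.1) i : ℝ) ^ nOf w i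
      rw [Fin.prod_univ_castSucc (f := fun i : Fin (w.length + 1) =>
        (1 : ℝ) / (k.1 i : ℝ) ^ nOf (a :: w) i)]
      rw [nOf_last]
      have hterm : ∀ i : Fin w.length,
          (1 : ℝ) / (k.1 (Fin.castSucc i) : ℝ) ^ nOf (a :: w) (Fin.castSucc i) =
          (1 : ℝ) / ((Fin.init k.1) i : ℝ) ^ nOf w i := by
        intro i
        rw [nOf_castSucc]
        rfl
      rw [Finset.prod_congr rfl (fun i _ => hterm i)]
      rw [one_div, mul_comm]

/-- admissible word: all entries `≥ 1`, leading (largest-index) exponent `≥ 2`. -/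
def Adm (w : List ℕ) : Prop := (∀ x ∈ w, 1 ≤ x) ∧ ∃ c t, w = c :: t ∧ 2 ≤ c

lemma MZ_summable (w : List ℕ) (hw : Adm w) :
    Summable (fun k : {k : Fin w.length → ℕ+ // StrictMono k} =>
      ∏ i, (1 : ℝ) / (k.1 i : ℝ) ^ nOf w i) := by
  obtain ⟨h1, c, t, rfl, hc⟩ := hw
  have hr : 0 < (c :: t).length := by simp
  have he : (⟨(c :: t).length - 1, Nat.sub_lt hr Nat.one_pos⟩ : Fin (c :: t).length) =
      Fin.last t.length := by
    apply Fin.ext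
    simp
  have h2 : 2 ≤ nOf (c :: t) ⟨(c :: t).length - 1, Nat.sub_lt hr Nat.one_pos⟩ := by
    rw [he, nOf_last]
    exact hc
  exact mzv_summable _ hr _ (fun i => h1 _ (List.getElem_mem _)) h2

lemma tendsto_ZP (w : List ℕ) (hw : Adm w) : Filter.Tendsto (ZP w) atTop (nhds (MZ w)) := by
  have hs := MZ_summable w hw
  have hmono : Monotone (DD w) := by
    intro N M h
    apply Set.Finite.toFinset_subset_toFinset.2
    intro k hk i
    exact lt_of_lt_of_le (hk i) h
  have hexh : ∀ k : {k : Fin w.length → ℕ+ // StrictMono k}, ∃ N, k ∈ DD w N := by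
    intro k
    refine ⟨(Finset.univ.sup fun i => (k.1 i : ℕ)) + 1, mem_DD.2 ?_⟩
    intro i
    exact Nat.lt_succ_of_le (Finset.le_sup (f := fun i => (k.1 i : ℕ)) (Finset.mem_univ i))
  have hD : Filter.Tendsto (DD w) atTop atTop := tendsto_atTop_finset_of_monotone hmono hexh
  have h1 : Filter.Tendsto
      (fun s : Finset {k : Fin w.length → ℕ+ // StrictMono k} =>
        ∑ k ∈ s, ∏ i, (1 : ℝ) / (k.1 i : ℝ) ^ nOf w i) atTop (nhds (MZ w)) := hs.hasSum
  exact (h1.comp hD).congr (fun N => (ZP_eq_sum w N).symm)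

lemma tendsto_list (l : List (List ℕ)) (h : ∀ w ∈ l, Adm w) :
    Filter.Tendsto (fun N => (l.map (fun w => ZP w N)).sum) atTop (nhds ((l.map MZ).sum)) := by
  induction l with
  | nil => simpa using tendsto_const_nhds
  | cons w l ih =>
    simp only [List.map_cons, List.sum_cons]
    exact (tendsto_ZP w (h w (List.mem_cons_self))).add
      (ih fun w' hw' => h w' (List.mem_cons_of_mem _ hw'))

lemma st_all_aux : ∀ (c : ℕ) (u v : List ℕ), u.length + v.length ≤ c →
    (∀ x ∈ u, 1 ≤ x) → (∀ x ∈ v, 1 ≤ x) → ∀ w ∈ st u v, ∀ x ∈ w, 1 ≤ x := by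
  intro c
  induction c with
  | zero =>
    intro u v h hu hv w hw
    obtain rfl : u = [] := by apply List.eq_nil_of_length_eq_zero; omega
    simp only [st_nil, List.mem_singleton] at hw
    subst hw
    exact hv
  | succ c ih =>
    intro u v h hu hv w hw
    match u, v with
    | [], v =>
      simp only [st_nil, List.mem_singleton] at hw
      subst hw
      exact hv
    | a :: u, [] =>
      simp only [st_cons_nil, List.mem_singleton] at hw
      subst hw
      exact hu
    | a :: u, b :: v =>
      have hu' : ∀ x ∈ u, 1 ≤ x := fun x hx => hu x (List.mem_cons_of_mem _ hx)
      have hv' : ∀ x ∈ v, 1 ≤ x := fun x hx => hv x (List.mem_cons_of_mem _ hx)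
      have ha : 1 ≤ a := hu a (List.mem_cons_self)
      have hb : 1 ≤ b := hv b (List.mem_cons_self)
      rw [st_cons_cons] at hw
      rcases List.mem_append.1 hw with h' | h'
      · rcases List.mem_append.1 h' with h'' | h''
        · obtain ⟨t, ht, rfl⟩ := List.mem_map.1 h''
          intro x hx
          rcases List.mem_cons.1 hx with rfl | hx
          · exact ha
          · exact ih u (b :: v) (by simp at h ⊢; omega) hu' hv t ht x hx
        · obtain ⟨t, ht, rfl⟩ := List.mem_map.1 h''
          intro x hx
          rcases List.mem_cons.1 hx with rfl | hx
          · exact hb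
          · exact ih (a :: u) v (by simp at h ⊢; omega) hu hv' t ht x hx
      · obtain ⟨t, ht, rfl⟩ := List.mem_map.1 h'
        intro x hx
        rcases List.mem_cons.1 hx with rfl | hx
        · omega
        · exact ih u v (by simp at h ⊢; omega) hu' hv' t ht x hx

lemma st_adm {u v : List ℕ} (hu : Adm u) (hv : Adm v) : ∀ w ∈ st u v, Adm w := by
  intro w hw
  obtain ⟨hu1, a, u', rfl, ha⟩ := hu
  obtain ⟨hv1, b, v', rfl, hb⟩ := hv
  constructor
  · exact st_all_aux _ _ _ le_rfl hu1 hv1 w hw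
  · have ha1 : 1 ≤ a := hu1 a (List.mem_cons_self)
    have hb1 : 1 ≤ b := hv1 b (List.mem_cons_self)
    rw [st_cons_cons] at hw
    rcases List.mem_append.1 hw with h' | h'
    · rcases List.mem_append.1 h' with h'' | h''
      · obtain ⟨t, _, rfl⟩ := List.mem_map.1 h''
        exact ⟨a, t, rfl, ha⟩
      · obtain ⟨t, _, rfl⟩ := List.mem_map.1 h''
        exact ⟨b, t, rfl, hb⟩
    · obtain ⟨t, _, rfl⟩ := List.mem_map.1 h'
      exact ⟨a + b, t, rfl, by omega⟩

lemma MZ_mul {u v : List ℕ} (hu : Adm u) (hv : Adm v) :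
    MZ u * MZ v = ((st u v).map MZ).sum :=
  tendsto_nhds_unique ((tendsto_ZP u hu).mul (tendsto_ZP v hv))
    ((tendsto_list _ (st_adm hu hv)).congr (fun N => (ZP_mul u v N).symm))

/-- The set of multiple zeta values `ζ(n₁, …, n_r)` for `r ≥ 1`, `n₁, …, n_r ≥ 1`
and `n_r ≥ 2`. -/
def mzvSet : Set ℝ :=
  {x : ℝ | ∃ (r : ℕ) (hr : 0 < r) (n : Fin r → ℕ),
    (∀ i, 1 ≤ n i) ∧ 2 ≤ n ⟨r - 1, Nat.sub_lt hr Nat.one_pos⟩ ∧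
    x = ∑' k : {k : Fin r → ℕ+ // StrictMono k}, ∏ i, (1 : ℝ) / (k.1 i : ℝ) ^ n i}

lemma MZ_mem (w : List ℕ) (hw : Adm w) : MZ w ∈ mzvSet := by
  obtain ⟨h1, c, t, rfl, hc⟩ := hw
  have hr : 0 < (c :: t).length := by simp
  have he : (⟨(c :: t).length - 1, Nat.sub_lt hr Nat.one_pos⟩ : Fin (c :: t).length) =
      Fin.last t.length := by
    apply Fin.ext
    simp
  have h2 : 2 ≤ nOf (c :: t) ⟨(c :: t).length - 1, Nat.sub_lt hr Nat.one_pos⟩ := by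
    rw [he, nOf_last]
    exact hc
  exact ⟨(c :: t).length, hr, nOf (c :: t), fun i => h1 _ (List.getElem_mem _), h2, rfl⟩

def smEquiv {r s : ℕ} (h : r = s) :
    {k : Fin r → ℕ+ // StrictMono k} ≃ {k : Fin s → ℕ+ // StrictMono k} where
  toFun k := ⟨fun i => k.1 (Fin.cast h.symm i),
    fun i j hij => k.2 (by rw [Fin.lt_def, Fin.coe_cast, Fin.coe_cast]; exact hij)⟩
  invFun k := ⟨fun i => k.1 (Fin.cast h i),
    fun i j hij => k.2 (by rw [Fin.lt_def, Fin.coe_cast, Fin.coe_cast]; exact hij)⟩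
  left_inv k := rfl
  right_inv k := rfl

lemma eq_MZ (r : ℕ) (n : Fin r → ℕ) :
    (∑' k : {k : Fin r → ℕ+ // StrictMono k}, ∏ i, (1 : ℝ) / (k.1 i : ℝ) ^ n i) =
      MZ ((List.ofFn n).reverse) := by
  have hl : ((List.ofFn n).reverse).length = r := by simp
  have hnOf : ∀ i : Fin ((List.ofFn n).reverse).length,
      nOf ((List.ofFn n).reverse) i = n (Fin.cast hl i) := by
    intro i
    unfold nOf
    rw [List.getElem_reverse, List.getElem_ofFn]
    apply congrArg n
    apply Fin.ext
    have h1 := i.2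
    simp at h1 ⊢
    omega
  rw [← Equiv.tsum_eq (smEquiv hl) (fun k : {k : Fin r → ℕ+ // StrictMono k} =>
    ∏ i, (1 : ℝ) / (k.1 i : ℝ) ^ n i)]
  apply tsum_congr
  intro k
  refine (Fintype.prod_equiv (finCongr hl) _ _ ?_).symm
  intro i
  rw [hnOf]
  show (1 : ℝ) / (k.1 i : ℝ) ^ n (Fin.cast hl i) =
    (1 : ℝ) / (k.1 (Fin.cast hl.symm (finCongr hl i)) : ℝ) ^ n (finCongr hl i)
  congr 2

lemma adm_ofFn (r : ℕ) (hr : 0 < r) (n : Fin r → ℕ) (h1 : ∀ i, 1 ≤ n i)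
    (h2 : 2 ≤ n ⟨r - 1, Nat.sub_lt hr Nat.one_pos⟩) : Adm ((List.ofFn n).reverse) := by
  constructor
  · intro x hx
    rw [List.mem_reverse, List.mem_ofFn] at hx
    obtain ⟨i, rfl⟩ := hx
    exact h1 i
  · have hne : (List.ofFn n).reverse ≠ [] := by
      intro h
      have := congrArg List.length h
      simp at this
      omega
    obtain ⟨c, t, hct⟩ := List.exists_cons_of_ne_nil hne
    refine ⟨c, t, hct, ?_⟩
    have hlen0 : 0 < ((List.ofFn n).reverse).length := by rw [hct]; simp
    have h0 : ((List.ofFn n).reverse)[0]'hlen0 = c := by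
      rw [List.getElem_of_eq hct]
      exact List.getElem_cons_zero _ _ _
    rw [← h0, List.getElem_reverse, List.getElem_ofFn]
    have hidx : (⟨r - 1, Nat.sub_lt hr Nat.one_pos⟩ : Fin r) =
        ⟨(List.ofFn n).length - 1 - 0, by simp; omega⟩ := by
      apply Fin.ext
      simp
    rw [← hidx]
    exact h2

lemma list_sum_mem_span (l : List ℝ) (h : ∀ z ∈ l, z ∈ mzvSet) :
    l.sum ∈ Submodule.span ℚ mzvSet := by
  induction l with
  | nil => simpa using Submodule.zero_mem _
  | cons z l ih =>
    rw [List.sum_cons]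
    exact Submodule.add_mem _ (Submodule.subset_span (h z (List.mem_cons_self)))
      (ih fun z' hz' => h z' (List.mem_cons_of_mem _ hz'))

lemma mzv_mul_mem {x y : ℝ} (hx : x ∈ mzvSet) (hy : y ∈ mzvSet) :
    x * y ∈ Submodule.span ℚ mzvSet := by
  obtain ⟨r, hr, n, hn1, hn2, rfl⟩ := hx
  obtain ⟨s, hs, m, hm1, hm2, rfl⟩ := hy
  rw [eq_MZ r n, eq_MZ s m]
  have hu : Adm ((List.ofFn n).reverse) := adm_ofFn r hr n hn1 hn2
  have hv : Adm ((List.ofFn m).reverse) := adm_ofFn s hs m hm1 hm2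
  rw [MZ_mul hu hv]
  apply list_sum_mem_span
  intro z hz
  obtain ⟨w, hw, rfl⟩ := List.mem_map.1 hz
  exact MZ_mem w (st_adm hu hv w hw)

/-- The set of all finite `ℚ`-linear combinations of `1` and of multiple zeta values
is a `ℚ`-subalgebra of `ℝ`; in particular, the product of any two multiple zeta
values is a `ℚ`-linear combination of multiple zeta values. -/
theorem mzv_span_is_subalgebra :
    (∃ A : Subalgebra ℚ ℝ,
      (A : Set ℝ) = (Submodule.span ℚ (insert (1 : ℝ) mzvSet) : Set ℝ)) ∧
    ∀ x ∈ mzvSet, ∀ y ∈ mzvSet, x * y ∈ Submodule.span ℚ mzvSet := by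
  constructor
  · have h1 : (1 : ℝ) ∈ Submodule.span ℚ (insert (1 : ℝ) mzvSet) :=
      Submodule.subset_span (Set.mem_insert _ _)
    have key : ∀ x ∈ Submodule.span ℚ (insert (1 : ℝ) mzvSet),
        ∀ y ∈ Submodule.span ℚ (insert (1 : ℝ) mzvSet),
        x * y ∈ Submodule.span ℚ (insert (1 : ℝ) mzvSet) := by
      intro x hx
      induction hx using Submodule.span_induction with
      | mem g hg =>
        intro y hy
        induction hy using Submodule.span_induction with
        | mem z hz =>
          rcases hg with rfl | hg
          · rw [one_mul]; exact Submodule.subset_span hz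
          · rcases hz with rfl | hz
            · rw [mul_one]; exact Submodule.subset_span (Set.mem_insert_iff.2 (Or.inr hg))
            · exact Submodule.span_mono (Set.subset_insert _ _) (mzv_mul_mem hg hz)
        | zero => rw [mul_zero]; exact Submodule.zero_mem _
        | add a b ha hb pa pb => rw [mul_add]; exact Submodule.add_mem _ pa pb
        | smul c a ha pa => rw [mul_smul_comm]; exact Submodule.smul_mem _ _ pa
      | zero => intro y hy; rw [zero_mul]; exact Submodule.zero_mem _
      | add a b ha hb pa pb =>
        intro y hy
        rw [add_mul]
        exact Submodule.add_mem _ (pa y hy) (pb y hy)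
      | smul c a ha pa =>
        intro y hy
        rw [smul_mul_assoc]
        exact Submodule.smul_mem _ _ (pa y hy)
    exact ⟨(Submodule.span ℚ (insert (1 : ℝ) mzvSet)).toSubalgebra h1
      (fun x y hx hy => key x hx y hy), rfl⟩
  · intro x hx y hy
    exact mzv_mul_mem hx hy
end
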